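/- arXiv:1512.03284 — 5 statements merged into one kernel-verified Lean document; each statement's English description precedes it below -/
import Mathlib

section
/- Let n,d ≥ 2 be integers, f ∈ H with Bombieri–Weyl norm ‖f‖ = 1, ζ ∈ ℂⁿ∖{0}, and η ∈ ℂ with f(ζ) = η^{d−1}·ζ, and suppose the restriction of DF_f(ζ,η) to (ζ,η)^⊥ is invertible. Then 1 ≤ 2d·μ(f,ζ,η). -/
noncomputable section

open scoped BigOperators

/-- `ℂⁿ` with the hermitian (L2) norm. -/
abbrev Cn (n : ℕ) : Type := EuclideanSpace ℂ (Fin n)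

/-- `ℂⁿ × ℂ` with the hermitian (L2) norm. -/
abbrev CnC (n : ℕ) : Type := WithLp 2 (EuclideanSpace ℂ (Fin n) × ℂ)

/-- The pair `(v, η) ∈ ℂⁿ × ℂ`. -/
def mkPair {n : ℕ} (v : Cn n) (η : ℂ) : CnC n := (WithLp.equiv 2 (Cn n × ℂ)).symm (v, η)

/-- Squared Bombieri-Weyl norm of a polynomial of degree `d` in `n` variables:
for `p = ∑ a_α √(d choose α) X^α` it equals `∑ |a_α|²`, i.e.
`∑ |coeff α p|² * α! / d!`. -/
def bwNormSq (n d : ℕ) (p : MvPolynomial (Fin n) ℂ) : ℝ :=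
  ∑ α ∈ p.support,
    (‖p.coeff α‖) ^ 2 * (∏ j, Nat.factorial (α j) : ℝ) / (Nat.factorial d : ℝ)

/-- Bombieri-Weyl norm of a system of `n` polynomials. -/
def bwNorm (n d : ℕ) (f : Fin n → MvPolynomial (Fin n) ℂ) : ℝ :=
  Real.sqrt (∑ i, bwNormSq n d (f i))

/-- Real part of the Bombieri-Weyl inner product of two systems. -/
def bwInnerRe (n d : ℕ) (f g : Fin n → MvPolynomial (Fin n) ℂ) : ℝ :=
  ∑ i, ∑ α ∈ (f i).support ∪ (g i).support,
    ((f i).coeff α * (starRingEnd ℂ) ((g i).coeff α)).re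
      * (∏ j, Nat.factorial (α j) : ℝ) / (Nat.factorial d : ℝ)

/-- Spherical (angular) distance of two systems w.r.t. the Bombieri-Weyl inner product. -/
def dSH (n d : ℕ) (f g : Fin n → MvPolynomial (Fin n) ℂ) : ℝ :=
  Real.arccos (bwInnerRe n d f g / (bwNorm n d f * bwNorm n d g))

/-- The map `F_f : ℂⁿ × ℂ → ℂⁿ`, `(X, Λ) ↦ f(X) - Λ^{d-1} X`. -/
def FF (n d : ℕ) (f : Fin n → MvPolynomial (Fin n) ℂ) (w : CnC n) : Cn n :=
  (WithLp.equiv 2 (Fin n → ℂ)).symm fun i =>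
    MvPolynomial.eval (fun j => ((WithLp.equiv 2 (Cn n × ℂ)) w).1 j) (f i)
      - ((WithLp.equiv 2 (Cn n × ℂ)) w).2 ^ (d - 1) * ((WithLp.equiv 2 (Cn n × ℂ)) w).1 i

/-- The hermitian orthogonal complement of `ℂ·w` in `ℂⁿ × ℂ`. -/
def perp {n : ℕ} (w : CnC n) : Submodule ℂ (CnC n) := (ℂ ∙ w)ᗮ

/-- The derivative `DF_f(w)` restricted to the subspace `u^⊥`. -/
def DFr (n d : ℕ) (f : Fin n → MvPolynomial (Fin n) ℂ) (w u : CnC n) :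
    perp u →L[ℂ] Cn n :=
  (fderiv ℂ (FF n d f) w).comp (perp u).subtypeL

/-- `DF_f(w)|_{u^⊥}` is invertible (as a map onto `ℂⁿ`). -/
def RestrInvertible (n d : ℕ) (f : Fin n → MvPolynomial (Fin n) ℂ) (w u : CnC n) : Prop :=
  (DFr n d f w u).IsInvertible

/-- The condition number `μ(f, v, λ) = ‖v‖^{d-1} ‖(DF_f(v,λ)|_{(v,λ)^⊥})⁻¹‖`
(the value is meaningful whenever the restriction is invertible). -/
def mu (n d : ℕ) (f : Fin n → MvPolynomial (Fin n) ℂ) (w : CnC n) : ℝ :=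
  ‖((WithLp.equiv 2 (Cn n × ℂ)) w).1‖ ^ (d - 1) * ‖(DFr n d f w w).inverse‖

/-- The block-diagonal map `diag(c·I_n, c')` on `ℂⁿ × ℂ`. -/
def diagMap (n : ℕ) (c c' : ℂ) : CnC n →L[ℂ] CnC n :=
  (((WithLp.prodContinuousLinearEquiv 2 ℂ (Cn n) ℂ).symm :
      (Cn n × ℂ) →L[ℂ] CnC n).comp
    (((c • ContinuousLinearMap.id ℂ (Cn n)).prodMap
        (c' • ContinuousLinearMap.id ℂ ℂ)).comp
      ((WithLp.prodContinuousLinearEquiv 2 ℂ (Cn n) ℂ) : CnC n →L[ℂ] (Cn n × ℂ))))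

/-- The condition number
`μ̂(f,v,λ) = ‖diag(‖f‖ I_n, ‖f‖^{(d-2)/(d-1)}) ∘ (DF_f(v,λ)|_{v^⊥×ℂ})⁻¹‖`
(the value is meaningful whenever the restriction is invertible);
here `v^⊥ × ℂ = (v,0)^⊥`. -/
def muHat (n d : ℕ) (f : Fin n → MvPolynomial (Fin n) ℂ) (v : Cn n) (lam : ℂ) : ℝ :=
  ‖(diagMap n ((bwNorm n d f : ℝ) : ℂ)
      (((bwNorm n d f) ^ (((d : ℝ) - 2) / ((d : ℝ) - 1)) : ℝ) : ℂ)).comp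
    (((perp (mkPair v 0)).subtypeL).comp
      (DFr n d f (mkPair v lam) (mkPair v 0)).inverse)‖

/-- Smale's `γ(f, ζ, η)`:
`‖(ζ,η)‖ · sup_{k ≥ 2} ‖(DF_f(ζ,η)|_{(ζ,η)^⊥})⁻¹ ∘ (1/k!) D^k F_f(ζ,η)‖^{1/(k-1)}`. -/
def gammaF (n d : ℕ) (f : Fin n → MvPolynomial (Fin n) ℂ) (w : CnC n) : ℝ :=
  ‖w‖ * ⨆ k : ℕ, if 2 ≤ k then
      ‖((DFr n d f w w).inverse).compContinuousMultilinearMap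
          (((Nat.factorial k : ℂ))⁻¹ • iteratedFDeriv ℂ k (FF n d f) w)‖
        ^ ((1 : ℝ) / ((k : ℝ) - 1))
    else 0

/-- Projective distance `d_P(x,y) = arccos(|⟨x,y⟩| / (‖x‖ ‖y‖))`. -/
def dProj {E : Type} [NormedAddCommGroup E] [InnerProductSpace ℂ E] (x y : E) : ℝ :=
  Real.arccos (‖(inner ℂ x y : ℂ)‖ / (‖x‖ * ‖y‖))

/-- Spherical distance `d_S(x,y) = arccos(Re⟨x,y⟩ / (‖x‖ ‖y‖))` for complex vectors
viewed as real vectors. -/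
def dSph {E : Type} [NormedAddCommGroup E] [InnerProductSpace ℂ E] (x y : E) : ℝ :=
  Real.arccos ((inner ℂ x y : ℂ).re / (‖x‖ * ‖y‖))

/-- Spherical distance in a real inner product space. -/
def dSphR {E : Type} [NormedAddCommGroup E] [InnerProductSpace ℝ E] (x y : E) : ℝ :=
  Real.arccos ((inner ℝ x y : ℝ) / (‖x‖ * ‖y‖))

end

noncomputable section AuxLemmas

open MvPolynomial

lemma aux_support_sum_eq {n d : ℕ} {p : MvPolynomial (Fin n) ℂ} (hp : p.IsHomogeneous d)
    {α : Fin n →₀ ℕ} (h : coeff α p ≠ 0) : (∑ j, α j) = d := by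
  have := hp h
  rw [← this]
  simp [Finsupp.weight_apply, Finsupp.sum]
  exact (Finset.sum_subset (Finset.subset_univ _) (by simp +contextual)).symm

lemma aux_X_mul_pderiv_monomial {n : ℕ} (j : Fin n) (α : Fin n →₀ ℕ) (a : ℂ) :
    X j * pderiv j (monomial α a) = (α j : ℂ) • monomial α a := by
  rw [pderiv_monomial]
  by_cases h : α j = 0
  · simp [h]
  · rw [X, monomial_mul, one_mul]
    have hle : Finsupp.single j 1 ≤ α := by
      rw [Finsupp.single_le_iff]; omega
    rw [add_tsub_cancel_of_le hle, smul_monomial, smul_eq_mul, mul_comm]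

lemma aux_euler_poly {n d : ℕ} {p : MvPolynomial (Fin n) ℂ} (hp : p.IsHomogeneous d) :
    ∑ j, X j * pderiv j p = (d : ℂ) • p := by
  conv_lhs => rw [p.as_sum]
  simp only [map_sum, Finset.mul_sum]
  rw [Finset.sum_comm]
  conv_rhs => rw [p.as_sum]
  rw [Finset.smul_sum]
  refine Finset.sum_congr rfl fun α hα => ?_
  simp only [aux_X_mul_pderiv_monomial]
  rw [← Finset.sum_smul, ← Nat.cast_sum, aux_support_sum_eq hp (mem_support_iff.mp hα)]

lemma aux_euler_eval {n d : ℕ} {p : MvPolynomial (Fin n) ℂ} (hp : p.IsHomogeneous d)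
    (x : Fin n → ℂ) :
    ∑ j, x j * eval x (pderiv j p) = (d : ℂ) * eval x p := by
  have := congrArg (eval x) (aux_euler_poly hp)
  simpa using this

lemma aux_bw_eval_bound {n d : ℕ} {p : MvPolynomial (Fin n) ℂ} (hp : p.IsHomogeneous d)
    (x : Fin n → ℂ) :
    ‖eval x p‖ ^ 2 ≤ bwNormSq n d p * (∑ j, ‖x j‖ ^ 2) ^ d := by
  classical
  set s := p.support with hs
  set P : (Fin n →₀ ℕ) → ℝ := fun α => ∏ j, ‖x j‖ ^ (α j) with hP
  have hPnn : ∀ α, 0 ≤ P α := fun α =>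
    Finset.prod_nonneg fun j _ => pow_nonneg (norm_nonneg _) _
  set w : (Fin n →₀ ℕ) → ℝ := fun α =>
    Real.sqrt ((∏ j, Nat.factorial (α j) : ℝ) / (Nat.factorial d : ℝ)) with hw
  have hfacpos : ∀ α : Fin n →₀ ℕ,
      (0:ℝ) < (∏ j, Nat.factorial (α j) : ℝ) / (Nat.factorial d : ℝ) := by
    intro α
    apply div_pos
    · exact_mod_cast Finset.prod_pos fun j _ => Nat.factorial_pos _
    · exact_mod_cast Nat.factorial_pos d
  have hwpos : ∀ α, 0 < w α := fun α => Real.sqrt_pos.mpr (hfacpos α)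
  have h1 : ‖eval x p‖ ≤ ∑ α ∈ s, ‖coeff α p‖ * P α := by
    rw [eval_eq]
    refine le_trans (norm_sum_le _ _) (Finset.sum_le_sum fun α hα => ?_)
    rw [norm_mul]
    refine mul_le_mul_of_nonneg_left ?_ (norm_nonneg _)
    rw [norm_prod]
    simp only [norm_pow]
    rw [hP]
    refine le_of_eq (Finset.prod_subset (Finset.subset_univ _) ?_)
    intro j _ hj
    rw [Finsupp.notMem_support_iff.mp hj, pow_zero]
  have h2 : (∑ α ∈ s, ‖coeff α p‖ * P α) ^ 2
      ≤ (∑ α ∈ s, (‖coeff α p‖ * w α) ^ 2)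
        * (∑ α ∈ s, (P α / w α) ^ 2) := by
    have := Finset.sum_mul_sq_le_sq_mul_sq s
      (fun α => ‖coeff α p‖ * w α) (fun α => P α / w α)
    refine le_trans (le_of_eq ?_) this
    congr 1
    refine Finset.sum_congr rfl fun α _ => ?_
    rw [mul_assoc, mul_div_cancel₀ _ (hwpos α).ne']
  have h3 : (∑ α ∈ s, (‖coeff α p‖ * w α) ^ 2) = bwNormSq n d p := by
    refine Finset.sum_congr rfl fun α _ => ?_
    rw [mul_pow, hw, Real.sq_sqrt (le_of_lt (hfacpos α)), mul_div_assoc]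
  have h4 : (∑ α ∈ s, (P α / w α) ^ 2) ≤ (∑ j, ‖x j‖ ^ 2) ^ d := by
    have hterm : ∀ α ∈ s, (P α / w α) ^ 2
        = (Nat.multinomial Finset.univ (⇑α) : ℝ) * ∏ j, (‖x j‖ ^ 2) ^ (α j) := by
      intro α hα
      have hmult : (Nat.multinomial Finset.univ (⇑α) : ℝ)
          = (Nat.factorial d : ℝ) / (∏ j, Nat.factorial (α j) : ℝ) := by
        have hspec := Nat.multinomial_spec Finset.univ (⇑α)
        rw [eq_div_iff (by exact_mod_cast (Finset.prod_pos fun j _ => Nat.factorial_pos _).ne')]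
        rw [← Nat.cast_prod, ← Nat.cast_mul, mul_comm, hspec,
          aux_support_sum_eq hp (mem_support_iff.mp hα)]
      have hPsq : P α ^ 2 = ∏ j, (‖x j‖ ^ 2) ^ (α j) := by
        rw [hP, ← Finset.prod_pow]
        exact Finset.prod_congr rfl fun j _ => by ring
      rw [div_pow, hw, Real.sq_sqrt (le_of_lt (hfacpos α)), hmult, hPsq]
      rw [div_div_eq_mul_div, div_eq_mul_inv, div_eq_mul_inv]
      ring
    rw [Finset.sum_congr rfl hterm]
    rw [Finset.sum_pow_eq_sum_piAntidiag Finset.univ (fun j => ‖x j‖ ^ 2) d]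
    have himg := Finset.sum_image (s := s) (g := fun α : Fin n →₀ ℕ => ⇑α)
      (f := fun k : Fin n → ℕ =>
        (Nat.multinomial Finset.univ k : ℝ) * ∏ j, (‖x j‖ ^ 2) ^ (k j))
      (fun a _ b _ h => by
        ext i
        exact congrFun h i)
    refine le_trans (le_of_eq himg.symm) (Finset.sum_le_sum_of_subset_of_nonneg ?_ ?_)
    · intro k hk
      rw [Finset.mem_image] at hk
      obtain ⟨α, hα, rfl⟩ := hk
      rw [Finset.mem_piAntidiag]
      exact ⟨aux_support_sum_eq hp (mem_support_iff.mp hα), fun i _ => Finset.mem_univ i⟩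
    · intro k _ _
      positivity
  calc ‖eval x p‖ ^ 2 ≤ (∑ α ∈ s, ‖coeff α p‖ * P α) ^ 2 := by
        apply pow_le_pow_left₀ (norm_nonneg _) h1 2
    _ ≤ (∑ α ∈ s, (‖coeff α p‖ * w α) ^ 2) * (∑ α ∈ s, (P α / w α) ^ 2) := h2
    _ ≤ bwNormSq n d p * (∑ j, ‖x j‖ ^ 2) ^ d := by
        rw [h3]
        refine mul_le_mul_of_nonneg_left h4 ?_
        rw [← h3]
        exact Finset.sum_nonneg fun α _ => sq_nonneg _

lemma aux_hasFDerivAt_eval_poly {n : ℕ} (p : MvPolynomial (Fin n) ℂ) (x : Fin n → ℂ) :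
    HasFDerivAt (fun y : Fin n → ℂ => eval y p)
      (∑ j, eval x (pderiv j p) • (ContinuousLinearMap.proj j : (Fin n → ℂ) →L[ℂ] ℂ)) x := by
  induction p using MvPolynomial.induction_on with
  | C a =>
      have h0 : (∑ j, eval x (pderiv j (C a : MvPolynomial (Fin n) ℂ)) •
          (ContinuousLinearMap.proj j : (Fin n → ℂ) →L[ℂ] ℂ)) = 0 := by
        ext v
        simp [pderiv_C]
      rw [h0]
      simpa using hasFDerivAt_const (eval x (C a : MvPolynomial (Fin n) ℂ)) x
  | add p q hp hq =>
      have := hp.add hq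
      simp only [map_add] at this ⊢
      refine this.congr_fderiv ?_
      ext v
      simp [add_mul, Finset.sum_add_distrib]
  | mul_X p i hp =>
      have hxi : HasFDerivAt (fun y : Fin n → ℂ => y i)
          (ContinuousLinearMap.proj i : (Fin n → ℂ) →L[ℂ] ℂ) x :=
        (ContinuousLinearMap.proj i : (Fin n → ℂ) →L[ℂ] ℂ).hasFDerivAt
      have hmul := hp.mul hxi
      have : HasFDerivAt (fun y : Fin n → ℂ => eval y (p * X i))
          (eval x p • (ContinuousLinearMap.proj i : (Fin n → ℂ) →L[ℂ] ℂ)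
            + x i • ∑ j, eval x (pderiv j p) •
                (ContinuousLinearMap.proj j : (Fin n → ℂ) →L[ℂ] ℂ)) x := by
        simpa [eval_mul, Pi.mul_def] using hmul
      convert this using 1
      rw [Finset.smul_sum]
      have : ∀ j : Fin n, eval x (pderiv j (p * X i)) •
            (ContinuousLinearMap.proj j : (Fin n → ℂ) →L[ℂ] ℂ)
          = (if j = i then eval x p • (ContinuousLinearMap.proj i : (Fin n → ℂ) →L[ℂ] ℂ) else 0)
            + (x i * eval x (pderiv j p)) •
                (ContinuousLinearMap.proj j : (Fin n → ℂ) →L[ℂ] ℂ) := by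
        intro j
        rw [pderiv_mul]
        by_cases h : j = i
        · subst h
          simp only [pderiv_X_self, mul_one, map_add, map_mul, eval_X, if_true]
          ext v
          simp [add_mul, mul_comm, mul_left_comm]
          ring
        · simp [pderiv_X_of_ne (Ne.symm h), h, mul_comm]
      rw [Finset.sum_congr rfl fun j _ => this j, Finset.sum_add_distrib,
        Finset.sum_ite_eq' Finset.univ i]
      simp [smul_smul]

lemma aux_hasFDerivAt_cpow {E : Type} [NormedAddCommGroup E] [NormedSpace ℂ E]
    {g : E → ℂ} {g' : E →L[ℂ] ℂ} {x : E} (h : HasFDerivAt g g' x) (m : ℕ) :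
    HasFDerivAt (fun y => g y ^ (m + 1)) ((((m : ℂ) + 1) * g x ^ m) • g') x := by
  induction m with
  | zero => simpa using h
  | succ k ih =>
      have := ih.mul h
      have heq : ((fun y => g y ^ (k + 1)) * g) = fun y => g y ^ (k + 1 + 1) := by
        funext y; simp only [Pi.mul_apply, ← pow_succ]
      rw [heq] at this
      refine this.congr_fderiv ?_
      ext z
      simp only [ContinuousLinearMap.add_apply, ContinuousLinearMap.smul_apply, smul_eq_mul]
      push_cast
      ring

def eCLE (n : ℕ) : CnC n ≃L[ℂ] (Cn n × ℂ) := WithLp.prodContinuousLinearEquiv 2 ℂ (Cn n) ℂ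
def piCLE (n : ℕ) : Cn n ≃L[ℂ] (Fin n → ℂ) := PiLp.continuousLinearEquiv 2 ℂ (fun _ : Fin n => ℂ)
def Amap (n : ℕ) : CnC n →L[ℂ] (Fin n → ℂ) :=
  ((piCLE n : Cn n ≃L[ℂ] (Fin n → ℂ)) : Cn n →L[ℂ] (Fin n → ℂ)).comp
    ((ContinuousLinearMap.fst ℂ (Cn n) ℂ).comp
      ((eCLE n : CnC n ≃L[ℂ] (Cn n × ℂ)) : CnC n →L[ℂ] (Cn n × ℂ)))
def Lmap (n : ℕ) : CnC n →L[ℂ] ℂ :=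
  (ContinuousLinearMap.snd ℂ (Cn n) ℂ).comp
    ((eCLE n : CnC n ≃L[ℂ] (Cn n × ℂ)) : CnC n →L[ℂ] (Cn n × ℂ))

lemma Amap_mkPair {n : ℕ} (v : Cn n) (t : ℂ) : Amap n (mkPair v t) = fun j => v j := rfl
lemma Lmap_mkPair {n : ℕ} (v : Cn n) (t : ℂ) : Lmap n (mkPair v t) = t := rfl

def Lcomp (n d : ℕ) (f : Fin n → MvPolynomial (Fin n) ℂ) (w : CnC n) (i : Fin n) :
    CnC n →L[ℂ] ℂ :=
  ((∑ j, eval (Amap n w) (pderiv j (f i)) •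
      (ContinuousLinearMap.proj j : (Fin n → ℂ) →L[ℂ] ℂ)).comp (Amap n))
    - ((Lmap n w) ^ (d - 1) •
          ((ContinuousLinearMap.proj i : (Fin n → ℂ) →L[ℂ] ℂ).comp (Amap n))
        + (Amap n w i) • ((((d : ℂ) - 1) * (Lmap n w) ^ (d - 2)) • Lmap n))

lemma aux_hasFDerivAt_FF (n d : ℕ) (f : Fin n → MvPolynomial (Fin n) ℂ)
    (hd : 2 ≤ d) (w : CnC n) :
    HasFDerivAt (FF n d f)
      ((((piCLE n).symm : (Fin n → ℂ) ≃L[ℂ] Cn n) : (Fin n → ℂ) →L[ℂ] Cn n).comp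
        (ContinuousLinearMap.pi (fun i => Lcomp n d f w i))) w := by
  have hg : ∀ i, HasFDerivAt
      (fun w' : CnC n => eval (Amap n w') (f i) - (Lmap n w') ^ (d - 1) * (Amap n w' i))
      (Lcomp n d f w i) w := by
    intro i
    have h1 : HasFDerivAt (fun w' : CnC n => eval (Amap n w') (f i))
        ((∑ j, eval (Amap n w) (pderiv j (f i)) •
          (ContinuousLinearMap.proj j : (Fin n → ℂ) →L[ℂ] ℂ)).comp (Amap n)) w :=
      (aux_hasFDerivAt_eval_poly (f i) (Amap n w)).comp w (Amap n).hasFDerivAt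
    have hlam : HasFDerivAt (fun w' : CnC n => Lmap n w') (Lmap n) w := (Lmap n).hasFDerivAt
    have hpow0 := aux_hasFDerivAt_cpow hlam (d - 2)
    have hd21 : d - 2 + 1 = d - 1 := by omega
    have hdc : ((d - 2 : ℕ) : ℂ) + 1 = (d : ℂ) - 1 := by
      push_cast [Nat.cast_sub hd]
      ring
    rw [hd21, hdc] at hpow0
    have hcoord : HasFDerivAt (fun w' : CnC n => Amap n w' i)
        ((ContinuousLinearMap.proj i : (Fin n → ℂ) →L[ℂ] ℂ).comp (Amap n)) w :=
      ((ContinuousLinearMap.proj i : (Fin n → ℂ) →L[ℂ] ℂ).comp (Amap n)).hasFDerivAt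
    have hmul := hpow0.mul hcoord
    exact h1.sub (by simpa [smul_smul, Pi.mul_def] using hmul)
  have hPhi : HasFDerivAt
      (fun w' : CnC n => fun i =>
        eval (Amap n w') (f i) - (Lmap n w') ^ (d - 1) * (Amap n w' i))
      (ContinuousLinearMap.pi (fun i => Lcomp n d f w i)) w :=
    hasFDerivAt_pi'' (fun i => by
      rw [ContinuousLinearMap.proj_pi]
      exact hg i)
  exact ((((piCLE n).symm : (Fin n → ℂ) ≃L[ℂ] Cn n) :
      (Fin n → ℂ) →L[ℂ] Cn n).hasFDerivAt).comp w hPhi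

lemma aux_final (dr S uu : ℝ) (hSnn : 0 ≤ S) (hdr : 2 ≤ dr)
    (husq : 1/2 ≤ uu ^ 2) (huu : 0 ≤ uu) (hchain : uu ≤ (dr - 1) * S) :
    1 ≤ 2 * dr * S := by
  have h1 : 1/2 ≤ ((dr - 1) * S) ^ 2 :=
    le_trans husq (pow_le_pow_left₀ huu hchain 2)
  have h3 : (dr - 1)^2 * S^2 ≤ dr^2 * S^2 := by nlinarith [sq_nonneg S]
  nlinarith [h1, h3, hSnn, hdr, mul_nonneg (mul_nonneg (by linarith : (0:ℝ) ≤ 2*dr) hSnn) hSnn]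

end AuxLemmas

set_option maxHeartbeats 2000000 in
set_option synthInstance.maxHeartbeats 400000 in
theorem one_le_two_d_mu (n d : ℕ) (hn : 2 ≤ n) (hd : 2 ≤ d)
    (f : Fin n → MvPolynomial (Fin n) ℂ) (hhom : ∀ i, (f i).IsHomogeneous d)
    (hf : bwNorm n d f = 1)
    (ζ : Cn n) (hζ : ζ ≠ 0) (η : ℂ)
    (heig : ∀ i, MvPolynomial.eval (fun j => ζ j) (f i) = η ^ (d - 1) * ζ i)
    (hinv : RestrInvertible n d f (mkPair ζ η) (mkPair ζ η)) :
    1 ≤ 2 * (d : ℝ) * mu n d f (mkPair ζ η) := by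
  classical
  set w0 : CnC n := mkPair ζ η with hw0
  set r : ℝ := ‖ζ‖ with hr
  have hr0 : 0 < r := norm_pos_iff.mpr hζ
  set t : ℝ := ‖η‖ with ht
  have ht0 : 0 ≤ t := norm_nonneg η
  -- sum of squared BW norms is 1
  have hsum_nonneg : ∀ i, (0:ℝ) ≤ bwNormSq n d (f i) := by
    intro i
    unfold bwNormSq
    refine Finset.sum_nonneg fun α _ => ?_
    positivity
  have hS0 : 0 ≤ ∑ i, bwNormSq n d (f i) :=
    Finset.sum_nonneg fun i _ => hsum_nonneg i
  have hS1 : ∑ i, bwNormSq n d (f i) = 1 := by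
    have h := hf
    unfold bwNorm at h
    have := Real.sq_sqrt hS0
    rw [h] at this
    simpa using this.symm
  have hr2 : r ^ 2 = ∑ j, ‖ζ j‖ ^ 2 := by
    rw [hr, EuclideanSpace.norm_eq,
      Real.sq_sqrt (Finset.sum_nonneg fun j _ => sq_nonneg _)]
  -- Step 1 : |η| ≤ ‖ζ‖
  have hP1 : t ≤ r := by
    have hsum : ∑ i, ‖MvPolynomial.eval (fun j => ζ j) (f i)‖ ^ 2
        = t ^ (2 * (d - 1)) * r ^ 2 := by
      rw [hr2, Finset.mul_sum]
      refine Finset.sum_congr rfl fun i _ => ?_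
      rw [heig i, norm_mul, norm_pow, mul_pow, ← ht, ← pow_mul, mul_comm (d-1) 2]
    have hbound : ∑ i, ‖MvPolynomial.eval (fun j => ζ j) (f i)‖ ^ 2
        ≤ (r ^ 2) ^ d := by
      calc ∑ i, ‖MvPolynomial.eval (fun j => ζ j) (f i)‖ ^ 2
          ≤ ∑ i, bwNormSq n d (f i) * (∑ j, ‖ζ j‖ ^ 2) ^ d :=
            Finset.sum_le_sum fun i _ => aux_bw_eval_bound (hhom i) _
        _ = (r ^ 2) ^ d := by rw [← Finset.sum_mul, hS1, one_mul, hr2]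
    rw [hsum] at hbound
    have hkey : t ^ (2 * (d - 1)) ≤ r ^ (2 * (d - 1)) := by
      have hrd : (r ^ 2) ^ d = r ^ (2 * (d - 1)) * r ^ 2 := by
        rw [← pow_mul, ← pow_add]
        congr 1
        omega
      rw [hrd] at hbound
      exact le_of_mul_le_mul_right hbound (by positivity)
    have h2d : 2 * (d - 1) ≠ 0 := by omega
    exact (pow_le_pow_iff_left₀ ht0 (le_of_lt hr0) h2d).mp hkey
  -- the witness vector
  set Nr : ℝ := r ^ 2 + t ^ 2 with hNrdef
  have hNr : 0 < Nr := by positivity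
  have hNrc : ((Nr : ℝ) : ℂ) ≠ 0 := by
    simp only [ne_eq, Complex.ofReal_eq_zero]
    exact hNr.ne'
  set c : ℂ := (starRingEnd ℂ) η / ((Nr : ℝ) : ℂ) with hc
  set u1 : Cn n := (-c) • ζ with hu1
  set u2 : ℂ := 1 - c * η with hu2
  set u : CnC n := mkPair u1 u2 with hu
  have hconj_mul : (starRingEnd ℂ) η * η = ((t ^ 2 : ℝ) : ℂ) := by
    rw [mul_comm, Complex.mul_conj, ht, Complex.sq_norm]
  have hcη : c * η = ((t ^ 2 / Nr : ℝ) : ℂ) := by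
    rw [hc, div_mul_eq_mul_div, hconj_mul]
    push_cast
    ring
  have hu2val : u2 = ((r ^ 2 / Nr : ℝ) : ℂ) := by
    rw [hu2, hcη]
    rw [show (1 : ℂ) = ((1:ℝ) : ℂ) from rfl, ← Complex.ofReal_sub]
    congr 1
    field_simp
    rw [hNrdef]; ring
  -- u is in the orthogonal complement
  have hmem : u ∈ perp w0 := by
    rw [perp, Submodule.mem_orthogonal_singleton_iff_inner_right]
    have hfst : (w0 : WithLp 2 (Cn n × ℂ)).ofLp.1 = ζ := rfl
    have hsnd : (w0 : WithLp 2 (Cn n × ℂ)).ofLp.2 = η := rfl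
    have hufst : (u : WithLp 2 (Cn n × ℂ)).ofLp.1 = u1 := rfl
    have husnd : (u : WithLp 2 (Cn n × ℂ)).ofLp.2 = u2 := rfl
    rw [WithLp.prod_inner_apply, hfst, hsnd, hufst, husnd]
    rw [hu1, inner_smul_right, inner_self_eq_norm_sq_to_K]
    rw [RCLike.inner_apply]
    rw [hu2, hc]
    have hconjNS : (starRingEnd ℂ) η * η = ((Complex.normSq η : ℝ) : ℂ) := by
      rw [mul_comm, Complex.mul_conj]
    have hNN : ((Nr : ℝ) : ℂ) = ((‖ζ‖ : ℝ) : ℂ) ^ 2 + ((Complex.normSq η : ℝ) : ℂ) := by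
      rw [hNrdef, ht]
      rw [Complex.sq_norm]
      push_cast
      ring
    field_simp
    rw [hNN]
    linear_combination (-(starRingEnd ℂ) η) * hconjNS
  -- norm of u
  have hcnorm : ‖c‖ = t / Nr := by
    rw [hc, norm_div]
    simp [ht, abs_of_pos hNr]
  have hu_normsq : ‖u‖ ^ 2 = r ^ 2 / Nr := by
    have := WithLp.prod_norm_sq_eq_of_L2 u
    rw [this]
    have hufst : (u : WithLp 2 (Cn n × ℂ)).fst = u1 := rfl
    have husnd : (u : WithLp 2 (Cn n × ℂ)).snd = u2 := rfl
    rw [hufst, husnd, hu1, norm_smul, norm_neg, hcnorm, hu2val]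
    rw [Complex.norm_real, Real.norm_eq_abs, abs_of_nonneg (by positivity)]
    rw [← hr]
    field_simp
    rw [hNrdef]
    ring
  have hu_sq_lb : (1:ℝ)/2 ≤ ‖u‖ ^ 2 := by
    rw [hu_normsq]
    rw [div_le_div_iff₀ (by norm_num) hNr]
    rw [hNrdef]
    nlinarith [hP1, ht0, hr0]
  -- the derivative applied to u
  have hFF := aux_hasFDerivAt_FF n d f hd w0
  have hηpow : η ^ (d - 2) * η = η ^ (d - 1) := by
    rw [← pow_succ]
    congr 1
    omega
  have hkey : (fderiv ℂ (FF n d f) w0) u = (-(((d:ℂ) - 1) * η ^ (d - 2))) • ζ := by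
    haveI : ContinuousSMul ℂ (CnC n) := IsBoundedSMul.continuousSMul
    rw [hFF.fderiv]
    have : ∀ i : Fin n, Lcomp n d f w0 i u = (-(((d:ℂ) - 1) * η ^ (d - 2))) * ζ i := by
      intro i
      have hAu : Amap n u = fun j => u1 j := Amap_mkPair u1 u2
      have hLu : Lmap n u = u2 := Lmap_mkPair u1 u2
      have hAw : Amap n w0 = fun j => ζ j := Amap_mkPair ζ η
      have hLw : Lmap n w0 = η := Lmap_mkPair ζ η
      simp only [Lcomp, ContinuousLinearMap.sub_apply, ContinuousLinearMap.add_apply,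
        ContinuousLinearMap.comp_apply, ContinuousLinearMap.sum_apply,
        ContinuousLinearMap.smul_apply, ContinuousLinearMap.proj_apply, smul_eq_mul,
        hAu, hLu, hAw, hLw]
      have hu1j : ∀ j, u1 j = -c * ζ j := by
        intro j
        rw [hu1]
        simp
      have hsum : ∑ j, MvPolynomial.eval (fun k => ζ k) (MvPolynomial.pderiv j (f i)) * u1 j
          = (-c) * ((d : ℂ) * ((η ^ (d-1)) * ζ i)) := by
        rw [← heig i, ← aux_euler_eval (hhom i) (fun k => ζ k), Finset.mul_sum]
        refine Finset.sum_congr rfl fun j _ => ?_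
        rw [hu1j j]
        ring
      rw [hsum, hu1j i, hu2]
      rw [← hηpow]
      ring
    have : (fun i => Lcomp n d f w0 i u) = fun i => (-(((d:ℂ) - 1) * η ^ (d - 2))) * ζ i :=
      funext this
    show ((piCLE n).symm : (Fin n → ℂ) →L[ℂ] Cn n)
        ((ContinuousLinearMap.pi fun i => Lcomp n d f w0 i) u) = _
    have hpi : (ContinuousLinearMap.pi fun i => Lcomp n d f w0 i) u
        = fun i => (-(((d:ℂ) - 1) * η ^ (d - 2))) * ζ i := by
      ext i
      rw [ContinuousLinearMap.pi_apply]
      exact congrFun this i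
    rw [hpi]
    ext i
    simp [piCLE]
  -- conclude
  set Dop := DFr n d f w0 w0 with hDop
  have hDu : Dop ⟨u, hmem⟩ = (-(((d:ℂ) - 1) * η ^ (d - 2))) • ζ := by
    rw [hDop, DFr, ContinuousLinearMap.comp_apply]
    rw [Submodule.subtypeL_apply]
    exact hkey
  have hinvrel : Dop.inverse (Dop ⟨u, hmem⟩) = ⟨u, hmem⟩ :=
    hinv.inverse_apply_eq.mpr rfl
  have habs : ‖(-(((d:ℂ) - 1) * η ^ (d - 2))) • ζ‖ = (((d:ℝ) - 1) * t ^ (d - 2)) * r := by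
    have hnd : ‖((d:ℂ) - 1)‖ = (d:ℝ) - 1 := by
      have h1 : ((d:ℂ) - 1) = (((d:ℝ) - 1 : ℝ) : ℂ) := by push_cast; ring
      rw [h1, Complex.norm_real, Real.norm_eq_abs, abs_of_nonneg]
      have : (2:ℝ) ≤ (d:ℝ) := by exact_mod_cast hd
      linarith
    have hnη : ‖η‖ = t := by exact ht.symm
    rw [norm_smul, norm_neg, norm_mul, norm_pow, hnd, hnη, ← hr]
  have hle : ‖u‖ ≤ ‖Dop.inverse‖ * ((((d:ℝ) - 1) * t ^ (d - 2)) * r) := by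
    have h1 : ‖(⟨u, hmem⟩ : perp w0)‖ ≤ ‖Dop.inverse‖ * ‖Dop ⟨u, hmem⟩‖ := by
      conv_lhs => rw [← hinvrel]
      exact Dop.inverse.le_opNorm _
    have h2 : ‖Dop ⟨u, hmem⟩‖ = (((d:ℝ) - 1) * t ^ (d - 2)) * r := by
      rw [hDu, habs]
    have h3 : ‖(⟨u, hmem⟩ : perp w0)‖ = ‖u‖ := rfl
    rw [h3, h2] at h1
    exact h1
  -- final arithmetic
  have hfst2 : ((WithLp.equiv 2 (Cn n × ℂ)) w0).1 = ζ := rfl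
  have hmu : mu n d f w0 = r ^ (d - 1) * ‖Dop.inverse‖ := by
    unfold mu
    rw [hfst2, ← hr, ← hDop]
  rw [hmu]
  set S : ℝ := r ^ (d - 1) * ‖Dop.inverse‖ with hS
  have hSnn : 0 ≤ S := by positivity
  have hdr : (2:ℝ) ≤ (d:ℝ) := by exact_mod_cast hd
  have hd1 : (1:ℝ) ≤ (d:ℝ) - 1 := by linarith only [hdr]
  have htr : t ^ (d - 2) ≤ r ^ (d - 2) := pow_le_pow_left₀ ht0 hP1 _
  have hrd : r ^ (d - 2) * r = r ^ (d - 1) := by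
    rw [← pow_succ]
    congr 1
    omega
  have hchain : ‖u‖ ≤ (((d:ℝ) - 1)) * S := by
    calc ‖u‖ ≤ ‖Dop.inverse‖ * ((((d:ℝ) - 1) * t ^ (d - 2)) * r) := hle
      _ ≤ ‖Dop.inverse‖ * ((((d:ℝ) - 1) * r ^ (d - 2)) * r) := by
          gcongr
      _ = (((d:ℝ) - 1)) * S := by
          rw [hS, mul_assoc, hrd]
          ring
  exact aux_final (d:ℝ) S ‖u‖ hSnn hdr hu_sq_lb (norm_nonneg u) hchain
end

section
/- Let n,d ≥ 2 be integers, f ∈ H, ζ ∈ ℂⁿ with ‖ζ‖ = 1, and η ∈ ℂ with f(ζ) = η^{d−1}·ζ, and suppose the restriction of DF_f(ζ,η) to (ζ,η)^⊥ is invertible. Then 1 ≤ d·(‖f‖ + max{|η|^{d−1}, |η|^{d−2}})·‖(DF_f(ζ,η)|_{(ζ,η)^⊥})^{−1}‖. -/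
noncomputable section AuxProof

open MvPolynomial Finset

lemma bwNormSq_nonneg (n m : ℕ) (p : MvPolynomial (Fin n) ℂ) : 0 ≤ bwNormSq n m p := by
  apply Finset.sum_nonneg
  intro α _
  positivity

lemma coeff_pderiv_eq {n : ℕ} (p : MvPolynomial (Fin n) ℂ) (j : Fin n) (β : Fin n →₀ ℕ) :
    MvPolynomial.coeff β (MvPolynomial.pderiv j p)
      = ((β j + 1 : ℕ) : ℂ) * MvPolynomial.coeff (β + Finsupp.single j 1) p := by
  classical
  conv_lhs => rw [p.as_sum, map_sum]
  rw [MvPolynomial.coeff_sum]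
  simp only [pderiv_monomial, coeff_monomial]
  rw [Finset.sum_eq_single (β + Finsupp.single j 1)]
  · rw [if_pos (add_tsub_cancel_right β (Finsupp.single j 1))]
    have : ((β + Finsupp.single j 1 : Fin n →₀ ℕ) j) = β j + 1 := by
      simp [Finsupp.add_apply, Finsupp.single_eq_same]
    rw [this]
    ring
  · intro α hα hne
    by_cases h : α - Finsupp.single j 1 = β
    · by_cases hj : α j = 0
      · simp [h, hj]
      · exfalso
        apply hne
        have hle : Finsupp.single j 1 ≤ α := by
          rw [Finsupp.single_le_iff]
          omega
        rw [← h, tsub_add_cancel_of_le hle]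
    · simp [h]
  · intro h
    rw [MvPolynomial.notMem_support_iff] at h
    simp [h]

lemma isHomog_support_sum {n d : ℕ} {p : MvPolynomial (Fin n) ℂ} (h : p.IsHomogeneous d) :
    ∀ α ∈ p.support, ∑ j, α j = d := by
  intro α hα
  have h1 := h (MvPolynomial.mem_support_iff.mp hα)
  rw [← h1]
  simp only [Finsupp.weight_apply, Pi.one_apply, smul_eq_mul, mul_one, Finsupp.sum]
  exact (Finset.sum_subset (Finset.subset_univ _)
    (fun x _ hx => by simpa using Finsupp.notMem_support_iff.mp hx)).symm

lemma eval_abs_sq_le {n : ℕ} (m : ℕ) (p : MvPolynomial (Fin n) ℂ)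
    (hs : ∀ β ∈ p.support, ∑ j, β j = m)
    (ζ : Fin n → ℂ) (hζ : ∑ j, ‖ζ j‖ ^ 2 = 1) :
    ‖MvPolynomial.eval ζ p‖ ^ 2 ≤ bwNormSq n m p := by
  classical
  set w : (Fin n →₀ ℕ) → ℝ := fun β => (∏ j, ((β j).factorial : ℝ)) / (m.factorial : ℝ) with hw
  have hwpos : ∀ β, 0 < w β := by
    intro β
    apply div_pos
    · exact Finset.prod_pos (fun j _ => by exact_mod_cast (β j).factorial_pos)
    · exact_mod_cast m.factorial_pos
  set A : (Fin n →₀ ℕ) → ℝ := fun β => ‖coeff β p‖ * Real.sqrt (w β) with hA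
  set B : (Fin n →₀ ℕ) → ℝ := fun β => (∏ j, ‖ζ j‖ ^ (β j)) * Real.sqrt (w β)⁻¹
    with hB
  have h1 : ‖MvPolynomial.eval ζ p‖ ≤ ∑ β ∈ p.support, A β * B β := by
    rw [eval_eq']
    refine (norm_sum_le _ _).trans (Finset.sum_le_sum ?_)
    intro β _
    rw [norm_mul]
    have habs : ‖∏ j, ζ j ^ β j‖ = ∏ j, ‖ζ j‖ ^ β j := by
      rw [norm_prod]
      exact Finset.prod_congr rfl fun j _ => norm_pow _ _
    rw [habs]
    apply le_of_eq
    have hne : Real.sqrt (w β) ≠ 0 := by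
      exact (Real.sqrt_pos.mpr (hwpos β)).ne'
    rw [hA, hB]
    simp only
    rw [Real.sqrt_inv]
    field_simp
  have h2 := Finset.sum_mul_sq_le_sq_mul_sq p.support A B
  have hAsq : ∑ β ∈ p.support, A β ^ 2 = bwNormSq n m p := by
    apply Finset.sum_congr rfl
    intro β _
    rw [hA]
    simp only
    rw [mul_pow, Real.sq_sqrt (hwpos β).le, hw, mul_div_assoc]
  have hBsq : ∑ β ∈ p.support, B β ^ 2 ≤ 1 := by
    have hterm : ∀ β ∈ p.support, B β ^ 2
        = ((Nat.multinomial Finset.univ ⇑β : ℕ) : ℝ)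
            * ∏ j, (‖ζ j‖ ^ 2) ^ (β j) := by
      intro β hβ
      have hfac : (∏ j, ((β j).factorial : ℝ)) ≠ 0 := by
        apply Finset.prod_ne_zero_iff.mpr
        intro j _
        exact_mod_cast (β j).factorial_pos.ne'
      have hmulti : ((Nat.multinomial Finset.univ ⇑β : ℕ) : ℝ)
          = (m.factorial : ℝ) / ∏ j, ((β j).factorial : ℝ) := by
        rw [eq_div_iff hfac, mul_comm]
        have := Nat.multinomial_spec Finset.univ ⇑β
        have hsum : ∑ j, β j = m := hs β hβ
        rw [hsum] at this
        exact_mod_cast congrArg (Nat.cast : ℕ → ℝ) this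
      rw [hB]
      simp only
      rw [mul_pow, Real.sq_sqrt (inv_pos.mpr (hwpos β)).le, hw]
      rw [inv_div, hmulti, ← Finset.prod_pow]
      have : ∀ j, (‖ζ j‖ ^ (β j)) ^ 2 = (‖ζ j‖ ^ 2) ^ (β j) := by
        intro j
        rw [← pow_mul, ← pow_mul, mul_comm]
      simp_rw [this]
      ring
    rw [Finset.sum_congr rfl hterm]
    have himg := Finset.sum_image (s := p.support)
      (g := fun β : Fin n →₀ ℕ => ⇑β)
      (f := fun γ : Fin n → ℕ => ((Nat.multinomial Finset.univ γ : ℕ) : ℝ)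
        * ∏ j, (‖ζ j‖ ^ 2) ^ (γ j))
      (fun a _ b _ hab => DFunLike.coe_injective hab)
    rw [← himg]
    have hsub : p.support.image (fun β : Fin n →₀ ℕ => ⇑β)
        ⊆ Finset.piAntidiag Finset.univ m := by
      intro γ hγ
      rw [Finset.mem_image] at hγ
      obtain ⟨β, hβ, rfl⟩ := hγ
      rw [Finset.mem_piAntidiag]
      exact ⟨hs β hβ, fun i _ => Finset.mem_univ i⟩
    calc ∑ γ ∈ p.support.image (fun β : Fin n →₀ ℕ => ⇑β),
          ((Nat.multinomial Finset.univ γ : ℕ) : ℝ) * ∏ j, (‖ζ j‖ ^ 2) ^ (γ j)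
        ≤ ∑ γ ∈ Finset.piAntidiag Finset.univ m,
          ((Nat.multinomial Finset.univ γ : ℕ) : ℝ) * ∏ j, (‖ζ j‖ ^ 2) ^ (γ j) := by
          apply Finset.sum_le_sum_of_subset_of_nonneg hsub
          intro γ _ _
          positivity
      _ = (∑ j, ‖ζ j‖ ^ 2) ^ m :=
          (Finset.sum_pow_eq_sum_piAntidiag Finset.univ _ m).symm
      _ = 1 := by rw [hζ, one_pow]
  have habs_nonneg : (0:ℝ) ≤ ‖MvPolynomial.eval ζ p‖ := norm_nonneg _
  calc ‖MvPolynomial.eval ζ p‖ ^ 2 ≤ (∑ β ∈ p.support, A β * B β) ^ 2 := by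
        apply pow_le_pow_left₀ habs_nonneg h1
    _ ≤ (∑ β ∈ p.support, A β ^ 2) * ∑ β ∈ p.support, B β ^ 2 := h2
    _ ≤ bwNormSq n m p * 1 := by
        rw [hAsq]
        apply mul_le_mul_of_nonneg_left hBsq (bwNormSq_nonneg n m p)
    _ = bwNormSq n m p := mul_one _

lemma prod_factorial_add_single {n : ℕ} (β : Fin n →₀ ℕ) (j : Fin n) :
    (∏ i : Fin n, (((β + Finsupp.single j 1 : Fin n →₀ ℕ) i).factorial : ℝ))
      = ((β j + 1 : ℕ) : ℝ) * ∏ i, ((β i).factorial : ℝ) := by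
  classical
  rw [← Finset.mul_prod_erase Finset.univ _ (Finset.mem_univ j),
      ← Finset.mul_prod_erase Finset.univ (fun i => ((β i).factorial : ℝ)) (Finset.mem_univ j)]
  have h1 : ((β + Finsupp.single j 1 : Fin n →₀ ℕ) j) = β j + 1 := by
    simp [Finsupp.add_apply, Finsupp.single_eq_same]
  have h2 : ∀ i ∈ (Finset.univ : Finset (Fin n)).erase j,
      (((β + Finsupp.single j 1 : Fin n →₀ ℕ) i).factorial : ℝ) = ((β i).factorial : ℝ) := by
    intro i hi
    have : (β + Finsupp.single j 1 : Fin n →₀ ℕ) i = β i := by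
      simp [Finsupp.add_apply, Finsupp.single_eq_of_ne' (Finset.ne_of_mem_erase hi).symm]
    rw [this]
  rw [Finset.prod_congr rfl h2, h1, Nat.factorial_succ]
  push_cast
  ring

lemma sum_bwNormSq_pderiv_le {n d : ℕ} (hd : 2 ≤ d) (p : MvPolynomial (Fin n) ℂ)
    (hs : ∀ α ∈ p.support, ∑ j, α j = d) :
    ∑ j, bwNormSq n (d - 1) (MvPolynomial.pderiv j p) ≤ (d : ℝ) ^ 2 * bwNormSq n d p := by
  classical
  set S : Fin n → (Fin n →₀ ℕ) → ℝ := fun j α =>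
    (α j : ℝ) * ‖coeff α p‖ ^ 2 * (∏ i, ((α i).factorial : ℝ))
      / ((d - 1).factorial : ℝ) with hS
  have step1 : ∀ j, bwNormSq n (d - 1) (MvPolynomial.pderiv j p) ≤ ∑ α ∈ p.support, S j α := by
    intro j
    unfold bwNormSq
    have himg : ∑ β ∈ (MvPolynomial.pderiv j p).support,
        ‖(MvPolynomial.pderiv j p).coeff β‖ ^ 2
          * (∏ i, ((β i).factorial : ℝ)) / ((d - 1).factorial : ℝ)
        = ∑ α ∈ (MvPolynomial.pderiv j p).support.image
            (fun β => β + Finsupp.single j 1), S j α := by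
      rw [Finset.sum_image (fun a _ b _ hab => by
        exact add_right_cancel hab)]
      apply Finset.sum_congr rfl
      intro β _
      rw [hS]
      simp only
      rw [coeff_pderiv_eq, norm_mul, mul_pow, prod_factorial_add_single]
      have h1 : (((β + Finsupp.single j 1 : Fin n →₀ ℕ) j : ℕ) : ℝ) = ((β j : ℝ) + 1) := by
        have : (β + Finsupp.single j 1 : Fin n →₀ ℕ) j = β j + 1 := by
          simp [Finsupp.add_apply, Finsupp.single_eq_same]
        rw [this]
        push_cast
        ring
      rw [h1]
      have h2 : ‖((β j + 1 : ℕ) : ℂ)‖ = ((β j : ℝ) + 1) := by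
        rw [Complex.norm_natCast]
        push_cast
        ring
      rw [h2]
      push_cast
      ring
    rw [himg]
    apply Finset.sum_le_sum_of_subset_of_nonneg
    · intro α hα
      rw [Finset.mem_image] at hα
      obtain ⟨β, hβ, rfl⟩ := hα
      rw [MvPolynomial.mem_support_iff] at hβ ⊢
      rw [coeff_pderiv_eq] at hβ
      exact fun h => hβ (by rw [h, mul_zero])
    · intro α _ _
      rw [hS]
      positivity
  calc ∑ j, bwNormSq n (d - 1) (MvPolynomial.pderiv j p)
      ≤ ∑ j, ∑ α ∈ p.support, S j α := Finset.sum_le_sum fun j _ => step1 j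
    _ = ∑ α ∈ p.support, ∑ j, S j α := Finset.sum_comm
    _ = (d : ℝ) ^ 2 * bwNormSq n d p := by
        unfold bwNormSq
        rw [Finset.mul_sum]
        apply Finset.sum_congr rfl
        intro α hα
        rw [hS]
        simp only
        rw [← Finset.sum_div, ← Finset.sum_mul, ← Finset.sum_mul]
        have h1 : ∑ j, (α j : ℝ) = (d : ℝ) := by
          rw [← Nat.cast_sum]
          exact_mod_cast congrArg (Nat.cast : ℕ → ℝ) (hs α hα)
        rw [h1]
        have h2 : (d.factorial : ℝ) = (d : ℝ) * ((d - 1).factorial : ℝ) := by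
          have h2' : d.factorial = d * (d - 1).factorial := by
            conv_lhs => rw [show d = (d - 1) + 1 from by omega]
            rw [Nat.factorial_succ]
            congr 1
            omega
          exact_mod_cast h2'
        rw [h2]
        field_simp
        try ring
    
lemma hasFDerivAt_eval_poly {n : ℕ} (p : MvPolynomial (Fin n) ℂ) (x : Fin n → ℂ) :
    HasFDerivAt (fun y : Fin n → ℂ => MvPolynomial.eval y p)
      (∑ j, MvPolynomial.eval x (MvPolynomial.pderiv j p) •
        (ContinuousLinearMap.proj j : (Fin n → ℂ) →L[ℂ] ℂ)) x := by
  classical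
  induction p using MvPolynomial.induction_on with
  | C a =>
      have h0 : (∑ j, MvPolynomial.eval x
            (MvPolynomial.pderiv j (MvPolynomial.C a : MvPolynomial (Fin n) ℂ)) •
            (ContinuousLinearMap.proj j : (Fin n → ℂ) →L[ℂ] ℂ)) = 0 := by
        ext y
        simp [MvPolynomial.pderiv_C]
      rw [h0]
      simp only [MvPolynomial.eval_C]
      exact hasFDerivAt_const a x
  | add p q hp hq =>
      have h := hp.add hq
      simp only [map_add]
      refine h.congr_fderiv (Eq.symm ?_)
      rw [← Finset.sum_add_distrib]
      exact Finset.sum_congr rfl fun j _ => add_smul _ _ _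
  | mul_X p i hp =>
      have hx : HasFDerivAt (fun y : Fin n → ℂ => y i)
          (ContinuousLinearMap.proj i : (Fin n → ℂ) →L[ℂ] ℂ) x := hasFDerivAt_apply i x
      have hmul := hp.mul hx
      simp only [map_mul, MvPolynomial.eval_X]
      refine hmul.congr_fderiv (Eq.symm ?_)
      ext y
      simp only [ContinuousLinearMap.coe_sum', Finset.sum_apply,
        ContinuousLinearMap.smul_apply, ContinuousLinearMap.proj_apply,
        ContinuousLinearMap.add_apply, smul_eq_mul,
        MvPolynomial.pderiv_mul, MvPolynomial.pderiv_X, map_add, map_mul,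
        MvPolynomial.eval_X, Pi.single_apply, apply_ite (MvPolynomial.eval x),
        map_one, map_zero, mul_ite, mul_one, mul_zero, ite_mul, zero_mul]
      have hterm : ∀ j, (MvPolynomial.eval x (MvPolynomial.pderiv j p) * x i
            + if i = j then MvPolynomial.eval x p else 0) * y j
          = x i * (MvPolynomial.eval x (MvPolynomial.pderiv j p) * y j)
            + (if i = j then MvPolynomial.eval x p * y j else 0) := by
        intro j
        by_cases h : i = j <;> simp [h] <;> ring
      rw [Finset.sum_congr rfl fun j _ => hterm j, Finset.sum_add_distrib,
        Finset.sum_ite_eq Finset.univ i (fun j => MvPolynomial.eval x p * y j)]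
      simp only [Finset.mem_univ, if_true]
      rw [← Finset.mul_sum]
      ring

lemma abs_sum_mul_le_sq {n : ℕ} (a u : Fin n → ℂ) :
    ‖∑ j, a j * u j‖ ^ 2
      ≤ (∑ j, ‖a j‖ ^ 2) * (∑ j, ‖u j‖ ^ 2) := by
  calc ‖∑ j, a j * u j‖ ^ 2
      ≤ (∑ j, ‖a j‖ * ‖u j‖) ^ 2 := by
        apply pow_le_pow_left₀ (norm_nonneg _)
        refine (norm_sum_le _ _).trans (le_of_eq ?_)
        exact Finset.sum_congr rfl fun j _ => norm_mul _ _
    _ ≤ _ := Finset.sum_mul_sq_le_sq_mul_sq _ _ _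

end AuxProof


set_option maxHeartbeats 4000000
set_option synthInstance.maxHeartbeats 1000000

theorem one_le_d_norm_inverse (n d : ℕ) (hn : 2 ≤ n) (hd : 2 ≤ d)
    (f : Fin n → MvPolynomial (Fin n) ℂ) (hhom : ∀ i, (f i).IsHomogeneous d)
    (ζ : Cn n) (hζ : ‖ζ‖ = 1) (η : ℂ)
    (heig : ∀ i, MvPolynomial.eval (fun j => ζ j) (f i) = η ^ (d - 1) * ζ i)
    (hinv : RestrInvertible n d f (mkPair ζ η) (mkPair ζ η)) :
    1 ≤ (d : ℝ) * (bwNorm n d f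
        + max (‖η‖ ^ (d - 1)) (‖η‖ ^ (d - 2)))
      * ‖(DFr n d f (mkPair ζ η) (mkPair ζ η)).inverse‖ := by
  classical
  have hd1 : d - 1 - 1 = d - 2 := by omega
  set w₀ : CnC n := mkPair ζ η with hw₀def
  set Qc : CnC n →L[ℂ] (Fin n → ℂ) :=
    ((PiLp.continuousLinearEquiv 2 ℂ (fun _ : Fin n => ℂ)) :
        Cn n →L[ℂ] (Fin n → ℂ)).comp
      ((ContinuousLinearMap.fst ℂ (Cn n) ℂ).comp
        ((WithLp.prodContinuousLinearEquiv 2 ℂ (Cn n) ℂ) :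
          CnC n →L[ℂ] Cn n × ℂ)) with hQcdef
  set Pc : CnC n →L[ℂ] ℂ :=
    (ContinuousLinearMap.snd ℂ (Cn n) ℂ).comp
      ((WithLp.prodContinuousLinearEquiv 2 ℂ (Cn n) ℂ) :
        CnC n →L[ℂ] Cn n × ℂ) with hPcdef
  have hQw : Qc w₀ = fun j => ζ j := rfl
  have hPw : Pc w₀ = η := rfl
  set D : Fin n → (CnC n →L[ℂ] ℂ) := fun i =>
    (∑ j, MvPolynomial.eval (Qc w₀) (MvPolynomial.pderiv j (f i)) •
        (ContinuousLinearMap.proj j : (Fin n → ℂ) →L[ℂ] ℂ)).comp Qc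
      - (Pc w₀ ^ (d - 1) • ((ContinuousLinearMap.proj i :
            (Fin n → ℂ) →L[ℂ] ℂ).comp Qc)
        + Qc w₀ i • ((((d - 1 : ℕ) : ℂ) * Pc w₀ ^ (d - 1 - 1)) • Pc)) with hDdef
  set L : CnC n →L[ℂ] Cn n :=
    (((PiLp.continuousLinearEquiv 2 ℂ (fun _ : Fin n => ℂ)).symm :
        (Fin n → ℂ) →L[ℂ] Cn n)).comp (ContinuousLinearMap.pi D) with hLdef
  have hcomp : ∀ i, HasFDerivAt (fun w : CnC n =>
      MvPolynomial.eval (Qc w) (f i) - Pc w ^ (d - 1) * Qc w i) (D i) w₀ := by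
    intro i
    have h1 : HasFDerivAt (fun w : CnC n => MvPolynomial.eval (Qc w) (f i))
        ((∑ j, MvPolynomial.eval (Qc w₀) (MvPolynomial.pderiv j (f i)) •
          (ContinuousLinearMap.proj j : (Fin n → ℂ) →L[ℂ] ℂ)).comp Qc) w₀ :=
      (hasFDerivAt_eval_poly (f i) (Qc w₀)).comp w₀ Qc.hasFDerivAt
    have h2 : HasFDerivAt (fun w : CnC n => Pc w ^ (d - 1))
        ((((d - 1 : ℕ) : ℂ) * Pc w₀ ^ (d - 1 - 1)) • Pc) w₀ :=
      (hasDerivAt_pow (d - 1) (Pc w₀)).comp_hasFDerivAt w₀ Pc.hasFDerivAt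
    have h3 : HasFDerivAt (fun w : CnC n => Qc w i)
        ((ContinuousLinearMap.proj i : (Fin n → ℂ) →L[ℂ] ℂ).comp Qc) w₀ :=
      ((ContinuousLinearMap.proj i : (Fin n → ℂ) →L[ℂ] ℂ).comp Qc).hasFDerivAt
    exact h1.sub (h2.mul h3)
  have hpi : HasFDerivAt (fun (w : CnC n) (i : Fin n) =>
      MvPolynomial.eval (Qc w) (f i) - Pc w ^ (d - 1) * Qc w i)
      (ContinuousLinearMap.pi D) w₀ := hasFDerivAt_pi.mpr hcomp
  have hFF : HasFDerivAt (FF n d f) L w₀ := by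
    have h := (((PiLp.continuousLinearEquiv 2 ℂ (fun _ : Fin n => ℂ)).symm :
        (Fin n → ℂ) →L[ℂ] Cn n)).hasFDerivAt.comp w₀ hpi
    exact h
  set Nf : ℝ := bwNorm n d f with hNfdef
  set M : ℝ := max (‖η‖ ^ (d - 1)) (‖η‖ ^ (d - 2)) with hMdef
  have hM0 : 0 ≤ M := le_max_iff.mpr (Or.inl (by positivity))
  have hN0 : 0 ≤ Nf := Real.sqrt_nonneg _
  have hζsum : ∑ j, ‖ζ j‖ ^ 2 = 1 := by
    have h1 : ‖ζ‖ = Real.sqrt (∑ j, ‖ζ j‖ ^ 2) := EuclideanSpace.norm_eq ζ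
    rw [hζ] at h1
    have h2 : ∑ j, ‖ζ j‖ ^ 2 = 1 := Real.sqrt_eq_one.mp h1.symm
    simpa using h2
  have hsupf : ∀ i, ∀ α ∈ (f i).support, ∑ j, α j = d := fun i => isHomog_support_sum (hhom i)
  have hsupd : ∀ i j, ∀ β ∈ (MvPolynomial.pderiv j (f i)).support, ∑ k, β k = d - 1 := by
    intro i j β hβ
    rw [MvPolynomial.mem_support_iff, coeff_pderiv_eq] at hβ
    have hc : MvPolynomial.coeff (β + Finsupp.single j 1) (f i) ≠ 0 :=
      fun h => hβ (by rw [h, mul_zero])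
    have hsum := hsupf i _ (MvPolynomial.mem_support_iff.mpr hc)
    have hexp : ∑ k, (β + Finsupp.single j 1 : Fin n →₀ ℕ) k = (∑ k, β k) + 1 := by
      simp [Finsupp.add_apply, Finset.sum_add_distrib, Finsupp.single_apply,
        Finset.sum_ite_eq]
    rw [hexp] at hsum
    omega
  have hevalb : ∀ i j, ‖MvPolynomial.eval (fun k => ζ k)
        (MvPolynomial.pderiv j (f i))‖ ^ 2
      ≤ bwNormSq n (d - 1) (MvPolynomial.pderiv j (f i)) :=
    fun i j => eval_abs_sq_le (d - 1) _ (hsupd i j) _ hζsum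
  have hbound : ∀ z : CnC n, ‖L z‖ ≤ ((d : ℝ) * (Nf + M)) * ‖z‖ := by
    intro z
    set u : Cn n := z.fst with hu
    set μ : ℂ := z.snd with hμ
    have hQz : Qc z = fun j => u j := rfl
    have hPz : Pc z = μ := rfl
    have hznorm : ‖z‖ ^ 2 = ‖u‖ ^ 2 + ‖μ‖ ^ 2 := WithLp.prod_norm_sq_eq_of_L2 z
    have hul : ‖u‖ ≤ ‖z‖ := by
      nlinarith [norm_nonneg u, norm_nonneg z, norm_nonneg μ, sq_nonneg ‖μ‖]
    have hμl : ‖μ‖ ≤ ‖z‖ := by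
      nlinarith [norm_nonneg u, norm_nonneg z, norm_nonneg μ, sq_nonneg ‖u‖]
    set g : Fin n → ℂ := fun i =>
      ∑ j, MvPolynomial.eval (Qc w₀) (MvPolynomial.pderiv j (f i)) * u j with hg
    set a : Cn n := (WithLp.equiv 2 (Fin n → ℂ)).symm g with ha
    have hLz : L z = a - (η ^ (d - 1) • u
        + ((((d - 1 : ℕ) : ℂ) * η ^ (d - 1 - 1)) * μ) • ζ) := by
      ext i
      show D i z = (a - (η ^ (d - 1) • u
        + ((((d - 1 : ℕ) : ℂ) * η ^ (d - 1 - 1)) * μ) • ζ)) i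
      rw [hDdef]
      simp only [ContinuousLinearMap.sub_apply, ContinuousLinearMap.add_apply,
        ContinuousLinearMap.comp_apply, ContinuousLinearMap.coe_sum', Finset.sum_apply,
        ContinuousLinearMap.smul_apply, ContinuousLinearMap.proj_apply, smul_eq_mul,
        PiLp.sub_apply, PiLp.add_apply, PiLp.smul_apply, WithLp.equiv_symm_apply, WithLp.ofLp_toLp,
        hQz, hPz, hQw, hPw, ha, hg]
      ring
    have hsq : ∀ i, ‖g i‖ ^ 2 ≤ ((d : ℝ) ^ 2 * bwNormSq n d (f i)) * ‖u‖ ^ 2 := by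
      intro i
      have huu : ∑ j, ‖u j‖ ^ 2 = ‖u‖ ^ 2 := by
        have h1 : ‖u‖ = Real.sqrt (∑ j, ‖u j‖ ^ 2) := EuclideanSpace.norm_eq u
        rw [h1, Real.sq_sqrt (by positivity)]
      have hcs := abs_sum_mul_le_sq
        (fun j => MvPolynomial.eval (Qc w₀) (MvPolynomial.pderiv j (f i))) (fun j => u j)
      have hmid : ∑ j, ‖MvPolynomial.eval (Qc w₀)
            (MvPolynomial.pderiv j (f i))‖ ^ 2
          ≤ (d : ℝ) ^ 2 * bwNormSq n d (f i) := by
        calc ∑ j, ‖MvPolynomial.eval (Qc w₀)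
              (MvPolynomial.pderiv j (f i))‖ ^ 2
            ≤ ∑ j, bwNormSq n (d - 1) (MvPolynomial.pderiv j (f i)) := by
              apply Finset.sum_le_sum
              intro j _
              rw [hQw]
              exact hevalb i j
          _ ≤ (d : ℝ) ^ 2 * bwNormSq n d (f i) :=
              sum_bwNormSq_pderiv_le hd (f i) (hsupf i)
      calc ‖g i‖ ^ 2 = ‖g i‖ ^ 2 := by rfl
        _ ≤ (∑ j, ‖MvPolynomial.eval (Qc w₀)
              (MvPolynomial.pderiv j (f i))‖ ^ 2) * (∑ j, ‖u j‖ ^ 2) := hcs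
        _ ≤ ((d : ℝ) ^ 2 * bwNormSq n d (f i)) * ‖u‖ ^ 2 := by
            rw [huu]
            apply mul_le_mul_of_nonneg_right hmid (by positivity)
    have hna : ‖a‖ ≤ (d : ℝ) * Nf * ‖u‖ := by
      have h1 : ‖a‖ = Real.sqrt (∑ i, ‖g i‖ ^ 2) := EuclideanSpace.norm_eq a
      rw [h1]
      have h2 : ∑ i, ‖g i‖ ^ 2 ≤ ((d : ℝ) * Nf * ‖u‖) ^ 2 := by
        calc ∑ i, ‖g i‖ ^ 2 ≤ ∑ i, ((d : ℝ) ^ 2 * bwNormSq n d (f i)) * ‖u‖ ^ 2 :=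
              Finset.sum_le_sum fun i _ => hsq i
          _ = (d : ℝ) ^ 2 * ‖u‖ ^ 2 * ∑ i, bwNormSq n d (f i) := by
              rw [Finset.mul_sum]
              apply Finset.sum_congr rfl
              intro i _
              ring
          _ = ((d : ℝ) * Nf * ‖u‖) ^ 2 := by
              have h3 : (∑ i, bwNormSq n d (f i)) = Nf ^ 2 := by
                rw [hNfdef]
                unfold bwNorm
                rw [Real.sq_sqrt (Finset.sum_nonneg fun i _ => bwNormSq_nonneg n d (f i))]
              rw [h3]
              ring
      calc Real.sqrt (∑ i, ‖g i‖ ^ 2) ≤ Real.sqrt (((d : ℝ) * Nf * ‖u‖) ^ 2) :=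
            Real.sqrt_le_sqrt h2
        _ = (d : ℝ) * Nf * ‖u‖ := Real.sqrt_sq (by positivity)
    have hnb : ‖η ^ (d - 1) • u‖ ≤ M * ‖z‖ := by
      rw [norm_smul, norm_pow]
      have h1 : ‖η‖ ^ (d - 1) ≤ M := le_max_left _ _
      exact mul_le_mul h1 hul (norm_nonneg u) hM0
    have hnc : ‖((((d - 1 : ℕ) : ℂ) * η ^ (d - 1 - 1)) * μ) • ζ‖
        ≤ ((d : ℝ) - 1) * (M * ‖z‖) := by
      rw [norm_smul, hζ, mul_one, norm_mul, norm_mul, norm_pow]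
      have h1 : ‖((d - 1 : ℕ) : ℂ)‖ = (d : ℝ) - 1 := by
        rw [Complex.norm_natCast]
        have h2 : (1 : ℕ) ≤ d := by omega
        push_cast [Nat.cast_sub h2]
        ring
      rw [h1, hd1]
      have h2 : ‖η‖ ^ (d - 2) ≤ M := le_max_right _ _
      have h3 : ‖η‖ ^ (d - 2) = ‖η‖ ^ (d - 2) := by
        rfl
      have hd' : (0 : ℝ) ≤ (d : ℝ) - 1 := by
        have h4 : (1 : ℝ) ≤ (d : ℝ) := by
          have : (1 : ℕ) ≤ d := by omega
          exact_mod_cast this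
        linarith
      rw [mul_assoc]
      apply mul_le_mul_of_nonneg_left _ hd'
      rw [h3]
      exact mul_le_mul h2 hμl (norm_nonneg μ) hM0
    have hfin : ‖L z‖ ≤ (d : ℝ) * Nf * ‖u‖ + (M * ‖z‖ + ((d : ℝ) - 1) * (M * ‖z‖)) := by
      rw [hLz]
      refine (norm_sub_le _ _).trans ?_
      gcongr
      refine (norm_add_le _ _).trans ?_
      gcongr
    calc ‖L z‖ ≤ (d : ℝ) * Nf * ‖u‖ + (M * ‖z‖ + ((d : ℝ) - 1) * (M * ‖z‖)) := hfin
      _ ≤ (d : ℝ) * Nf * ‖z‖ + (M * ‖z‖ + ((d : ℝ) - 1) * (M * ‖z‖)) := by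
          gcongr
      _ = ((d : ℝ) * (Nf + M)) * ‖z‖ := by ring
  have hwnorm : ‖w₀‖ ^ 2 = 1 + ‖η‖ ^ 2 := by
    have h := WithLp.prod_norm_sq_eq_of_L2 w₀
    rw [show (w₀.fst : Cn n) = ζ from rfl, show (w₀.snd : ℂ) = η from rfl, hζ] at h
    simpa using h
  have hwne : w₀ ≠ 0 := by
    intro h
    rw [h, norm_zero] at hwnorm
    nlinarith [sq_nonneg ‖η‖]
  have hperp : perp w₀ ≠ ⊥ := by
    intro hbot
    have htop : (ℂ ∙ w₀) = ⊤ := Submodule.orthogonal_eq_bot_iff.mp hbot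
    have h1 : Module.finrank ℂ (CnC n) = 1 := by
      rw [← finrank_top ℂ (CnC n), ← htop, finrank_span_singleton hwne]
    have h2 : Module.finrank ℂ (CnC n) = n + 1 := by
      rw [(WithLp.linearEquiv 2 ℂ (Cn n × ℂ)).finrank_eq]
      rw [Module.finrank_prod, finrank_euclideanSpace_fin]
      simp
    omega
  obtain ⟨x, hxmem, hxne⟩ := (Submodule.ne_bot_iff _).mp hperp
  set x1 : CnC n := ‖x‖⁻¹ • x with hx1def
  have hx1mem : x1 ∈ perp w₀ := Submodule.smul_of_tower_mem _ _ hxmem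
  have hx1norm : ‖x1‖ = 1 := by
    rw [hx1def, norm_smul, norm_inv, norm_norm,
      inv_mul_cancel₀ (norm_ne_zero_iff.mpr hxne)]
  obtain ⟨A, hA⟩ := hinv
  have hinveq : (DFr n d f w₀ w₀).inverse = (A.symm : Cn n →L[ℂ] perp w₀) := by
    rw [← hA]
    exact ContinuousLinearMap.inverse_equiv A
  set xs : (perp w₀) := (⟨x1, hx1mem⟩ : perp w₀) with hxsdef
  have hxsn : ‖xs‖ = 1 := hx1norm
  have hDFrx : (DFr n d f w₀ w₀) xs = L x1 := by
    show ((fderiv ℂ (FF n d f) w₀).comp (perp w₀).subtypeL) xs = L x1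
    rw [ContinuousLinearMap.comp_apply, hFF.fderiv]
    rfl
  have key : (1 : ℝ) ≤ ‖(DFr n d f w₀ w₀).inverse‖ * ((d : ℝ) * (Nf + M)) := by
    have hstep : ‖(DFr n d f w₀ w₀) xs‖ ≤ (d : ℝ) * (Nf + M) := by
      rw [hDFrx]
      calc ‖L x1‖ ≤ ((d : ℝ) * (Nf + M)) * ‖x1‖ := hbound x1
        _ = (d : ℝ) * (Nf + M) := by rw [hx1norm, mul_one]
    calc (1 : ℝ) = ‖xs‖ := hxsn.symm
      _ = ‖(DFr n d f w₀ w₀).inverse ((DFr n d f w₀ w₀) xs)‖ := by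
          rw [hinveq, ← hA]
          simp
      _ ≤ ‖(DFr n d f w₀ w₀).inverse‖ * ‖(DFr n d f w₀ w₀) xs‖ :=
          ContinuousLinearMap.le_opNorm _ _
      _ ≤ ‖(DFr n d f w₀ w₀).inverse‖ * ((d : ℝ) * (Nf + M)) :=
          mul_le_mul_of_nonneg_left hstep (ContinuousLinearMap.opNorm_nonneg _)
  calc (1 : ℝ) ≤ ‖(DFr n d f w₀ w₀).inverse‖ * ((d : ℝ) * (Nf + M)) := key
    _ = (d : ℝ) * (Nf + M) * ‖(DFr n d f w₀ w₀).inverse‖ := by ring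
end

section
/- Let n ≥ 2, let ζ, v ∈ ℂⁿ with ‖ζ‖ = ‖v‖ = 1, and let η, λ ∈ ℂ with |η| ≤ 1. If d_S((ζ,η),(v,λ)) < π/16, then d_S((ζ,η),(v,λ)) ≥ (2/(π·√8))·d_P(ζ,v). -/
set_option maxHeartbeats 1000000

private lemma dS_dP_real_aux (a b c Nx Ny r : ℝ)
    (ha0 : 0 ≤ a) (ha1 : a ≤ 1) (hb0 : 0 ≤ b) (hb1 : b ≤ 1) (hc0 : 0 ≤ c)
    (hNx0 : 0 ≤ Nx) (hNy0 : 0 ≤ Ny)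
    (hnx2 : Nx ^ 2 = 1 + b ^ 2) (hny2 : Ny ^ 2 = 1 + c ^ 2)
    (hrle : r ≤ a + b * c) (habs : |r| ≤ Nx * Ny)
    (hδ : Real.arccos (r / (Nx * Ny)) < Real.pi / 16) :
    Real.arccos (r / (Nx * Ny)) ≥ 2 / (Real.pi * Real.sqrt 8) * Real.arccos a := by
  have hNx : 0 < Nx := by nlinarith [sq_nonneg b]
  have hNy : 0 < Ny := by nlinarith [sq_nonneg c]
  set N := Nx * Ny with hNdef
  have hN0 : 0 < N := mul_pos hNx hNy
  have hN2 : N ^ 2 = (1 + b ^ 2) * (1 + c ^ 2) := by rw [hNdef, mul_pow, hnx2, hny2]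
  set t := r / N with htdef
  have ht1 : t ≤ 1 := (div_le_one hN0).2 (le_trans (le_abs_self r) habs)
  have htm1 : -1 ≤ t := by
    rw [htdef, le_div_iff₀ hN0]
    nlinarith [neg_abs_le r]
  set θ := Real.arccos t with hθdef
  have hθ0 : 0 ≤ θ := Real.arccos_nonneg t
  have hcos : Real.cos θ = t := Real.cos_arccos htm1 ht1
  have hCS : 1 + b * c ≤ N := by
    have h2 : (1 + b * c) ^ 2 ≤ N ^ 2 := by rw [hN2]; nlinarith [sq_nonneg (b - c)]
    nlinarith [mul_nonneg hb0 hc0]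
  have hkey : (1 - a) / 8 ≤ 1 - t := by
    by_cases hN8 : N ≤ 8
    · have h1 : (1 - a) / 8 ≤ (1 - a) / N :=
        div_le_div_of_nonneg_left (by linarith) hN0 hN8
      have h2 : (1 - a) / N ≤ 1 - t := by
        have hle : 1 - a ≤ N - r := by nlinarith
        calc (1 - a) / N ≤ (N - r) / N := by gcongr
          _ = 1 - t := by rw [htdef]; field_simp
      linarith
    · exfalso
      push_neg at hN8
      set q := Real.sqrt 2 with hqdef
      have hq2 : q ^ 2 = 2 := Real.sq_sqrt (by norm_num)
      have hq0 : 0 < q := Real.sqrt_pos.2 (by norm_num)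
      have hq14 : 1.4 ≤ q := by nlinarith
      have hbc : b * c * q ≤ N := by
        have h2 : (b * c * q) ^ 2 ≤ N ^ 2 := by
          rw [hN2, mul_pow, mul_pow, hq2]
          have hb2 : b ^ 2 ≤ 1 := by nlinarith
          nlinarith [mul_le_mul_of_nonneg_right hb2 (sq_nonneg c)]
        nlinarith [mul_nonneg (mul_nonneg hb0 hc0) hq0.le]
      have htle : t ≤ 1 / 8 + 1 / q := by
        have h1 : t ≤ (a + b * c) / N := by rw [htdef]; gcongr
        have h2 : a / N ≤ 1 / 8 := by
          rw [div_le_div_iff₀ hN0 (by norm_num)]; nlinarith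
        have h3 : b * c / N ≤ 1 / q := by
          rw [div_le_div_iff₀ hN0 hq0]; nlinarith
        calc t ≤ (a + b * c) / N := h1
          _ = a / N + b * c / N := by ring
          _ ≤ 1 / 8 + 1 / q := add_le_add h2 h3
      have hπ : Real.pi ≤ 3.15 := by linarith [Real.pi_lt_d2]
      have hπ0 : 0 < Real.pi := Real.pi_pos
      have hlow : Real.cos (Real.pi / 16) < t := by
        have h := Real.cos_lt_cos_of_nonneg_of_le_pi hθ0 (by linarith) hδ
        rwa [hcos] at h
      have hcosge : 1 - (Real.pi / 16) ^ 2 / 2 ≤ Real.cos (Real.pi / 16) :=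
        Real.one_sub_sq_div_two_le_cos
      have h1q : 1 / q ≤ 1 / 1.4 := by
        rw [div_le_div_iff₀ hq0 (by norm_num)]; nlinarith
      nlinarith [sq_nonneg Real.pi]
  have hθsq : (1 - a) / 4 ≤ θ ^ 2 := by
    have h := Real.one_sub_sq_div_two_le_cos (x := θ)
    rw [hcos] at h
    linarith [hkey]
  set s := Real.arccos a with hsdef
  have hs0 : 0 ≤ s := Real.arccos_nonneg a
  have hsπ : s ≤ Real.pi := Real.arccos_le_pi a
  have hcoss : Real.cos s = a := Real.cos_arccos (by linarith) ha1
  have hssq : 2 / Real.pi ^ 2 * s ^ 2 ≤ 1 - a := by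
    have h := Real.cos_le_one_sub_mul_cos_sq (x := s) (by rwa [abs_of_nonneg hs0])
    rw [hcoss] at h; linarith
  have hπ0 : 0 < Real.pi := Real.pi_pos
  set q := Real.sqrt 2 with hqdef
  have hq2 : q ^ 2 = 2 := Real.sq_sqrt (by norm_num)
  have hq0 : 0 < q := Real.sqrt_pos.2 (by norm_num)
  have h8 : Real.sqrt 8 = 2 * q := by
    rw [hqdef, show (8:ℝ) = 2 ^ 2 * 2 by norm_num, Real.sqrt_mul (by positivity),
      Real.sqrt_sq (by norm_num)]
  have hsle : s ≤ q * Real.pi * θ := by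
    have hsq : s ^ 2 ≤ (q * Real.pi * θ) ^ 2 := by
      have h1 : s ^ 2 ≤ Real.pi ^ 2 / 2 * (1 - a) := by
        have hp2 : (0:ℝ) < Real.pi ^ 2 := by positivity
        have e : 2 / Real.pi ^ 2 * s ^ 2 * Real.pi ^ 2 = 2 * s ^ 2 := by field_simp
        nlinarith [mul_le_mul_of_nonneg_right hssq hp2.le]
      calc s ^ 2 ≤ Real.pi ^ 2 / 2 * (1 - a) := h1
        _ ≤ Real.pi ^ 2 / 2 * (4 * θ ^ 2) := by gcongr; linarith
        _ = (q * Real.pi * θ) ^ 2 := by rw [mul_pow, mul_pow, hq2]; ring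
    calc s = Real.sqrt (s ^ 2) := (Real.sqrt_sq hs0).symm
      _ ≤ Real.sqrt ((q * Real.pi * θ) ^ 2) := Real.sqrt_le_sqrt hsq
      _ = q * Real.pi * θ := Real.sqrt_sq (by positivity)
  rw [ge_iff_le, h8]
  have hcoef : (0:ℝ) ≤ 2 / (Real.pi * (2 * q)) := by positivity
  calc 2 / (Real.pi * (2 * q)) * s ≤ 2 / (Real.pi * (2 * q)) * (q * Real.pi * θ) :=
        mul_le_mul_of_nonneg_left hsle hcoef
    _ = θ := by field_simp

theorem dS_pair_ge_dP_first (n : ℕ) (hn : 2 ≤ n)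
    (ζ v : Cn n) (hζ : ‖ζ‖ = 1) (hv : ‖v‖ = 1)
    (η lam : ℂ) (hη : ‖η‖ ≤ 1)
    (hδ : dSph (mkPair ζ η) (mkPair v lam) < Real.pi / 16) :
    dSph (mkPair ζ η) (mkPair v lam) ≥ (2 / (Real.pi * Real.sqrt 8)) * dProj ζ v := by
  have hinner : (inner ℂ (mkPair ζ η) (mkPair v lam) : ℂ)
      = inner ℂ ζ v + (starRingEnd ℂ) η * lam := by
    rw [mkPair, mkPair, WithLp.prod_inner_apply]
    simp [RCLike.inner_apply, mul_comm]
  have hnx2 : ‖mkPair ζ η‖ ^ 2 = 1 + ‖η‖ ^ 2 := by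
    rw [mkPair, WithLp.prod_norm_sq_eq_of_L2]
    simp [hζ]
  have hny2 : ‖mkPair v lam‖ ^ 2 = 1 + ‖lam‖ ^ 2 := by
    rw [mkPair, WithLp.prod_norm_sq_eq_of_L2]
    simp [hv]
  have ha1 : ‖(inner ℂ ζ v : ℂ)‖ ≤ 1 := by
    have := norm_inner_le_norm (𝕜 := ℂ) ζ v
    simpa [hζ, hv] using this
  have hrle : (inner ℂ (mkPair ζ η) (mkPair v lam) : ℂ).re
      ≤ ‖(inner ℂ ζ v : ℂ)‖ + ‖η‖ * ‖lam‖ := by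
    rw [hinner]
    have h1 : (inner ℂ ζ v : ℂ).re ≤ ‖(inner ℂ ζ v : ℂ)‖ := Complex.re_le_norm _
    have h2 : ((starRingEnd ℂ) η * lam).re ≤ ‖η‖ * ‖lam‖ := by
      refine le_trans (Complex.re_le_norm _) ?_
      rw [norm_mul, Complex.norm_conj]
    simpa [Complex.add_re] using add_le_add h1 h2
  have habs : |(inner ℂ (mkPair ζ η) (mkPair v lam) : ℂ).re|
      ≤ ‖mkPair ζ η‖ * ‖mkPair v lam‖ := by
    refine le_trans (Complex.abs_re_le_norm _) ?_
    simpa using norm_inner_le_norm (𝕜 := ℂ) (mkPair ζ η) (mkPair v lam)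
  have hdP : dProj ζ v = Real.arccos (‖(inner ℂ ζ v : ℂ)‖) := by
    rw [dProj, hζ, hv]; norm_num
  rw [hdP]
  exact dS_dP_real_aux (‖(inner ℂ ζ v : ℂ)‖) (‖η‖) (‖lam‖)
    ‖mkPair ζ η‖ ‖mkPair v lam‖ (inner ℂ (mkPair ζ η) (mkPair v lam) : ℂ).re
    (norm_nonneg _) ha1 (norm_nonneg _) hη (norm_nonneg _)
    (norm_nonneg _) (norm_nonneg _) hnx2 hny2 hrle habs hδ
end

section
/- Let A : ℂ^{n+1} → ℂⁿ be a linear map of rank n with kernel ℂ·v for some v ≠ 0, and let u ∈ ℂ^{n+1}∖{0} be such that the restriction A|_{u^⊥} : u^⊥ → ℂⁿ is invertible. Then the restriction A|_{v^⊥} : v^⊥ → ℂⁿ is invertible and ‖(A|_{v^⊥})^{−1}‖ ≤ ‖(A|_{u^⊥})^{−1}‖ in operator norm. -/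
open Submodule

theorem inverse_norm_le_of_kernel (n : ℕ)
    (A : EuclideanSpace ℂ (Fin (n + 1)) →L[ℂ] EuclideanSpace ℂ (Fin n))
    (v : EuclideanSpace ℂ (Fin (n + 1))) (hv : v ≠ 0)
    (hker : LinearMap.ker A.toLinearMap = ℂ ∙ v)
    (hrk : LinearMap.range A.toLinearMap = ⊤)
    (u : EuclideanSpace ℂ (Fin (n + 1))) (hu : u ≠ 0)
    (hu_inv : (A.comp ((ℂ ∙ u)ᗮ).subtypeL).IsInvertible) :
    (A.comp ((ℂ ∙ v)ᗮ).subtypeL).IsInvertible ∧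
      ‖(A.comp ((ℂ ∙ v)ᗮ).subtypeL).inverse‖ ≤ ‖(A.comp ((ℂ ∙ u)ᗮ).subtypeL).inverse‖ := by
  classical
  have hinj : Function.Injective (A.comp ((ℂ ∙ v)ᗮ).subtypeL) := by
    intro x y hxy
    have h0 : (A.comp ((ℂ ∙ v)ᗮ).subtypeL) (x - y) = 0 := by rw [map_sub, hxy, sub_self]
    have hmem : ((x - y : (ℂ ∙ v)ᗮ) : EuclideanSpace ℂ (Fin (n + 1))) ∈ LinearMap.ker A.toLinearMap := h0
    rw [hker] at hmem
    have hz : ((x - y : (ℂ ∙ v)ᗮ) : EuclideanSpace ℂ (Fin (n + 1))) = 0 :=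
      (Submodule.disjoint_def.mp (Submodule.orthogonal_disjoint (ℂ ∙ v))) _ hmem (x - y).2
    exact sub_eq_zero.mp (Subtype.ext hz)
  have hsurj : Function.Surjective (A.comp ((ℂ ∙ v)ᗮ).subtypeL) := by
    intro y
    have hy : y ∈ LinearMap.range A.toLinearMap := hrk ▸ Submodule.mem_top
    obtain ⟨x, hx⟩ := hy
    refine ⟨orthogonalProjection (ℂ ∙ v)ᗮ x, ?_⟩
    have hd : x - (orthogonalProjection (ℂ ∙ v)ᗮ x : EuclideanSpace ℂ (Fin (n + 1)))
        ∈ LinearMap.ker A.toLinearMap := by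
      rw [hker]
      have h1 := sub_starProjection_mem_orthogonal (K := (ℂ ∙ v)ᗮ) x
      rwa [Submodule.orthogonal_orthogonal] at h1
    have h0 : A (x - (orthogonalProjection (ℂ ∙ v)ᗮ x : EuclideanSpace ℂ (Fin (n + 1)))) = 0 := hd
    rw [map_sub, sub_eq_zero] at h0
    exact h0 ▸ hx
  have hbij : Function.Bijective (A.comp ((ℂ ∙ v)ᗮ).subtypeL) := ⟨hinj, hsurj⟩
  let e : (ℂ ∙ v)ᗮ ≃L[ℂ] EuclideanSpace ℂ (Fin n) :=
    (LinearEquiv.ofBijective (A.comp ((ℂ ∙ v)ᗮ).subtypeL).toLinearMap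
      hbij).toContinuousLinearEquiv
  have he : (e : (ℂ ∙ v)ᗮ →L[ℂ] EuclideanSpace ℂ (Fin n)) = A.comp ((ℂ ∙ v)ᗮ).subtypeL := by
    ext x; rfl
  obtain ⟨eu, heu⟩ := hu_inv
  refine ⟨⟨e, he⟩, ?_⟩
  rw [← he, ← heu, ContinuousLinearMap.inverse_equiv, ContinuousLinearMap.inverse_equiv]
  refine ContinuousLinearMap.opNorm_le_bound _ (norm_nonneg ((eu.symm : EuclideanSpace ℂ (Fin n) →L[ℂ] (ℂ ∙ u)ᗮ))) fun y => ?_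
  set x' : (ℂ ∙ u)ᗮ := eu.symm y with hx'def
  have hx' : A (x' : EuclideanSpace ℂ (Fin (n + 1))) = y := by
    have h1 : (A.comp ((ℂ ∙ u)ᗮ).subtypeL) x' = y := by
      rw [← heu]; exact eu.apply_symm_apply y
    exact h1
  have hy : e.symm y = orthogonalProjection (ℂ ∙ v)ᗮ (x' : EuclideanSpace ℂ (Fin (n + 1))) := by
    apply e.injective
    rw [e.apply_symm_apply]
    have hAe : e (orthogonalProjection (ℂ ∙ v)ᗮ (x' : EuclideanSpace ℂ (Fin (n + 1))))
        = A ((orthogonalProjection (ℂ ∙ v)ᗮ (x' : EuclideanSpace ℂ (Fin (n + 1))) :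
            EuclideanSpace ℂ (Fin (n + 1)))) := rfl
    rw [hAe]
    have hd : (x' : EuclideanSpace ℂ (Fin (n + 1)))
        - (orthogonalProjection (ℂ ∙ v)ᗮ (x' : EuclideanSpace ℂ (Fin (n + 1))) :
            EuclideanSpace ℂ (Fin (n + 1))) ∈ LinearMap.ker A.toLinearMap := by
      rw [hker]
      have h1 := sub_starProjection_mem_orthogonal (K := (ℂ ∙ v)ᗮ)
        (x' : EuclideanSpace ℂ (Fin (n + 1)))
      rwa [Submodule.orthogonal_orthogonal] at h1
    have h0 : A ((x' : EuclideanSpace ℂ (Fin (n + 1)))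
        - (orthogonalProjection (ℂ ∙ v)ᗮ (x' : EuclideanSpace ℂ (Fin (n + 1))) :
            EuclideanSpace ℂ (Fin (n + 1)))) = 0 := hd
    rw [map_sub, sub_eq_zero] at h0
    rw [← h0, hx']
  calc ‖(e.symm : EuclideanSpace ℂ (Fin n) →L[ℂ] (ℂ ∙ v)ᗮ) y‖
      = ‖(orthogonalProjection (ℂ ∙ v)ᗮ (x' : EuclideanSpace ℂ (Fin (n + 1))) :
          EuclideanSpace ℂ (Fin (n + 1)))‖ := by
        simp only [ContinuousLinearEquiv.coe_coe, hy]; rfl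
    _ ≤ ‖(x' : EuclideanSpace ℂ (Fin (n + 1)))‖ := by
        calc ‖(orthogonalProjection (ℂ ∙ v)ᗮ (x' : EuclideanSpace ℂ (Fin (n + 1))) :
              EuclideanSpace ℂ (Fin (n + 1)))‖
            = ‖orthogonalProjection (ℂ ∙ v)ᗮ (x' : EuclideanSpace ℂ (Fin (n + 1)))‖ := rfl
          _ ≤ ‖(orthogonalProjection (ℂ ∙ v)ᗮ :
                EuclideanSpace ℂ (Fin (n + 1)) →L[ℂ] (ℂ ∙ v)ᗮ)‖
                * ‖(x' : EuclideanSpace ℂ (Fin (n + 1)))‖ :=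
              ContinuousLinearMap.le_opNorm _ _
          _ ≤ 1 * ‖(x' : EuclideanSpace ℂ (Fin (n + 1)))‖ := by
              gcongr
              exact orthogonalProjection_norm_le (ℂ ∙ v)ᗮ
          _ = ‖(x' : EuclideanSpace ℂ (Fin (n + 1)))‖ := one_mul _
    _ = ‖(eu.symm : EuclideanSpace ℂ (Fin n) →L[ℂ] (ℂ ∙ u)ᗮ) y‖ := rfl
    _ ≤ ‖(eu.symm : EuclideanSpace ℂ (Fin n) →L[ℂ] (ℂ ∙ u)ᗮ)‖ * ‖y‖ :=
        ContinuousLinearMap.le_opNorm _ _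
end

section
/- Let m ≥ 1, let a ∈ ℂᵐ be fixed, and let z be a standard complex Gaussian random vector in ℂᵐ (the 2m real coordinates given by the real and imaginary parts of the entries are independent centered real Gaussians of variance 1/2). Then the probability that ‖z − a‖ ≤ ‖z‖ is at least (1/√π) · 2·exp(−‖a‖²/4) / (‖a‖ + √(‖a‖² + 8)). -/
open MeasureTheory

noncomputable section

/-- The hermitian (Euclidean) norm on `ℂᵐ`. -/
def hermNorm {m : ℕ} (z : Fin m → ℂ) : ℝ :=
  Real.sqrt (∑ j, ‖z j‖ ^ 2)

end

open Real Set Filter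

namespace GaussShiftAux

/-! ### Tail bound for the Gaussian integral -/

lemma integrable_exp_neg_sq : Integrable (fun x : ℝ => Real.exp (-x^2)) := by
  have := integrable_exp_neg_mul_sq (b := 1) one_pos
  simpa using this

noncomputable def Ftail (t : ℝ) : ℝ := ∫ x in Set.Ici t, Real.exp (-x^2)

lemma Ftail_eq (t : ℝ) : Ftail t = Ftail 0 - ∫ x in (0:ℝ)..t, Real.exp (-x^2) := by
  have h1 : ∀ u : ℝ, Ftail u = (∫ x : ℝ, Real.exp (-x^2)) - ∫ x in Set.Iic u, Real.exp (-x^2) := by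
    intro u
    have h := intervalIntegral.integral_Iic_add_Ioi (μ := volume) (b := u)
      (f := fun x : ℝ => Real.exp (-x^2))
      (integrable_exp_neg_sq.integrableOn) (integrable_exp_neg_sq.integrableOn)
    have h2 : Ftail u = ∫ x in Set.Ioi u, Real.exp (-x^2) :=
      MeasureTheory.integral_Ici_eq_integral_Ioi
    rw [h2]; linarith
  have h2 : (∫ x in Set.Iic t, Real.exp (-x^2)) - ∫ x in Set.Iic (0:ℝ), Real.exp (-x^2)
      = ∫ x in (0:ℝ)..t, Real.exp (-x^2) :=
    intervalIntegral.integral_Iic_sub_Iic integrable_exp_neg_sq.integrableOn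
      integrable_exp_neg_sq.integrableOn
  rw [h1 t, h1 0]; linarith

lemma hasDerivAt_Ftail (t : ℝ) : HasDerivAt Ftail (-Real.exp (-t^2)) t := by
  have h : HasDerivAt (fun u => ∫ x in (0:ℝ)..u, Real.exp (-x^2)) (Real.exp (-t^2)) t := by
    refine intervalIntegral.integral_hasDerivAt_right
      ((integrable_exp_neg_sq.intervalIntegrable (μ := volume)) ..) ?_ ?_
    · exact (Real.continuous_exp.comp (by continuity)).stronglyMeasurableAtFilter _ _
    · exact (Real.continuous_exp.comp (by continuity)).continuousAt
  have h2 : HasDerivAt (fun u => Ftail 0 - ∫ x in (0:ℝ)..u, Real.exp (-x^2))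
      (0 - Real.exp (-t^2)) t := (hasDerivAt_const _ _).sub h
  have h3 : HasDerivAt (fun u => Ftail 0 - ∫ x in (0:ℝ)..u, Real.exp (-x^2))
      (-Real.exp (-t^2)) t := by simpa using h2
  exact h3.congr_of_eventuallyEq (Filter.Eventually.of_forall fun u => (Ftail_eq u))

noncomputable def Gcmp (t : ℝ) : ℝ := Real.exp (-t^2) * (t + Real.sqrt (t^2+2))⁻¹

lemma sq_sqrt2 (t : ℝ) : Real.sqrt (t^2+2) ^ 2 = t^2 + 2 :=
  Real.sq_sqrt (by positivity)

lemma sqrt2_pos (t : ℝ) : 0 < Real.sqrt (t^2+2) := Real.sqrt_pos.2 (by positivity)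

lemma den_pos (t : ℝ) : 0 < t + Real.sqrt (t^2+2) := by
  rcases le_or_gt 0 t with h | h
  · have := sqrt2_pos t; linarith
  · have h1 : t^2 < t^2 + 2 := by linarith
    have h2 : |t| < Real.sqrt (t^2+2) := by
      rw [← Real.sqrt_sq_eq_abs]
      exact Real.sqrt_lt_sqrt (by positivity) h1
    have := abs_lt.mp h2
    linarith [this.1]

lemma hasDerivAt_Gcmp (t : ℝ) :
    HasDerivAt Gcmp ((-2*t) * Real.exp (-t^2) * (t + Real.sqrt (t^2+2))⁻¹
      + Real.exp (-t^2) * (-(1 + t / Real.sqrt (t^2+2)) / (t + Real.sqrt (t^2+2))^2)) t := by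
  have hs : HasDerivAt (fun u : ℝ => Real.sqrt (u^2+2)) (t / Real.sqrt (t^2+2)) t := by
    have h1 : HasDerivAt (fun u : ℝ => u^2+2) (2*t) t := by
      simpa using ((hasDerivAt_pow 2 t).add_const 2)
    have h2 := (Real.hasDerivAt_sqrt (x := t^2+2) (by positivity)).comp t h1
    refine h2.congr_deriv ?_
    field_simp
  have hd : HasDerivAt (fun u : ℝ => u + Real.sqrt (u^2+2)) (1 + t / Real.sqrt (t^2+2)) t :=
    (hasDerivAt_id t).add hs
  have hinv : HasDerivAt (fun u : ℝ => (u + Real.sqrt (u^2+2))⁻¹)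
      (-(1 + t / Real.sqrt (t^2+2)) / (t + Real.sqrt (t^2+2))^2) t :=
    hd.inv (ne_of_gt (den_pos t))
  have he : HasDerivAt (fun u : ℝ => Real.exp (-u^2)) ((-2*t) * Real.exp (-t^2)) t := by
    have h1 : HasDerivAt (fun u : ℝ => -u^2) (-(2*t)) t := by
      simpa using (hasDerivAt_pow 2 t).fun_neg
    have := (Real.hasDerivAt_exp (-t^2)).comp t h1
    refine this.congr_deriv ?_
    ring
  exact he.fun_mul hinv

lemma deriv_ineq (t : ℝ) :
    -Real.exp (-t^2) - ((-2*t) * Real.exp (-t^2) * (t + Real.sqrt (t^2+2))⁻¹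
      + Real.exp (-t^2) * (-(1 + t / Real.sqrt (t^2+2)) / (t + Real.sqrt (t^2+2))^2)) ≤ 0 := by
  set s := Real.sqrt (t^2+2) with hs
  have hs2 : s^2 = t^2+2 := sq_sqrt2 t
  have hsp : 0 < s := sqrt2_pos t
  have hdp : 0 < t + s := den_pos t
  have hts : t ≤ s := by nlinarith
  have he : 0 < Real.exp (-t^2) := Real.exp_pos _
  rw [sub_nonpos]
  have key : 2*t*s*(t+s) + (s + t) ≤ s*(t+s)^2 := by nlinarith
  have h1 : (-2*t) * (t+s)⁻¹ + (-(1 + t/s) / (t+s)^2) ≥ -1 := by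
    rw [ge_iff_le, ← sub_nonneg]
    have expand : (-2*t) * (t+s)⁻¹ + (-(1 + t/s) / (t+s)^2) - (-1)
        = (s*(t+s)^2 - (2*t*s*(t+s) + (s+t))) / (s * (t+s)^2) := by
      field_simp
      ring
    rw [expand]
    apply div_nonneg (by linarith) (by positivity)
  have expand2 : (-2*t) * Real.exp (-t^2) * (t+s)⁻¹
      + Real.exp (-t^2) * (-(1 + t/s) / (t+s)^2)
      = Real.exp (-t^2) * ((-2*t) * (t+s)⁻¹ + (-(1 + t/s) / (t+s)^2)) := by ring
  rw [expand2]
  calc -Real.exp (-t^2) = Real.exp (-t^2) * (-1) := by ring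
  _ ≤ _ := by
      apply mul_le_mul_of_nonneg_left h1 (le_of_lt he)

lemma tendsto_Ftail : Tendsto Ftail atTop (nhds 0) := by
  have h1 : Tendsto (fun t => ∫ x in (0:ℝ)..t, Real.exp (-x^2)) atTop
      (nhds (∫ x in Set.Ioi (0:ℝ), Real.exp (-x^2))) :=
    intervalIntegral_tendsto_integral_Ioi 0 integrable_exp_neg_sq.integrableOn tendsto_id
  have h0 : Ftail 0 = ∫ x in Set.Ioi (0:ℝ), Real.exp (-x^2) :=
    MeasureTheory.integral_Ici_eq_integral_Ioi
  have h2 : Tendsto (fun t => Ftail 0 - ∫ x in (0:ℝ)..t, Real.exp (-x^2)) atTop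
      (nhds (Ftail 0 - ∫ x in Set.Ioi (0:ℝ), Real.exp (-x^2))) :=
    (tendsto_const_nhds).sub h1
  rw [← h0] at h2
  simp only [sub_self] at h2
  exact h2.congr (fun t => (Ftail_eq t).symm)

lemma tendsto_Gcmp : Tendsto Gcmp atTop (nhds 0) := by
  have hexp : Tendsto (fun t : ℝ => Real.exp (-t^2)) atTop (nhds 0) := by
    apply Real.tendsto_exp_atBot.comp
    have : Tendsto (fun t : ℝ => t^2) atTop atTop := tendsto_pow_atTop (by norm_num)
    exact tendsto_neg_atBot_iff.mpr this
  apply squeeze_zero_norm' _ hexp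
  filter_upwards [eventually_ge_atTop (1:ℝ)] with t ht
  have hd : 1 ≤ t + Real.sqrt (t^2+2) := by
    have := Real.sqrt_nonneg (t^2+2); linarith
  have hg : 0 ≤ Gcmp t := by
    unfold Gcmp; positivity
  rw [Real.norm_of_nonneg hg]
  unfold Gcmp
  calc Real.exp (-t^2) * (t + Real.sqrt (t^2+2))⁻¹ ≤ Real.exp (-t^2) * 1 := by
        apply mul_le_mul_of_nonneg_left _ (Real.exp_pos _).le
        rw [inv_le_one_iff₀]; right; exact hd
  _ = Real.exp (-t^2) := mul_one _

lemma Gcmp_le_Ftail (t : ℝ) : Gcmp t ≤ Ftail t := by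
  set h : ℝ → ℝ := fun u => Ftail u - Gcmp u with hh
  have hderiv : ∀ u, HasDerivAt h
      (-Real.exp (-u^2) - ((-2*u) * Real.exp (-u^2) * (u + Real.sqrt (u^2+2))⁻¹
      + Real.exp (-u^2) * (-(1 + u / Real.sqrt (u^2+2)) / (u + Real.sqrt (u^2+2))^2))) u :=
    fun u => (hasDerivAt_Ftail u).sub (hasDerivAt_Gcmp u)
  have hanti : Antitone h := by
    apply antitone_of_deriv_nonpos
    · exact fun u => (hderiv u).differentiableAt
    · intro u
      rw [(hderiv u).deriv]
      exact deriv_ineq u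
  have hlim : Tendsto h atTop (nhds 0) := by
    simpa using tendsto_Ftail.sub tendsto_Gcmp
  have : 0 ≤ h t := by
    apply le_of_tendsto hlim
    filter_upwards [eventually_ge_atTop t] with u hu
    exact hanti hu
  simpa [hh] using this

lemma tail_lower_bound (t : ℝ) :
    Real.exp (-t^2) / (t + Real.sqrt (t^2+2)) ≤ ∫ x in Set.Ici t, Real.exp (-x^2) := by
  have := Gcmp_le_Ftail t
  unfold Gcmp Ftail at this
  rw [div_eq_mul_inv]
  exact this

/-! ### Measure-preserving maps -/

noncomputable def Phi0 (m : ℕ) : (Fin m → ℂ) → ((Fin m ⊕ Fin m) → ℝ) := fun z =>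
  (MeasurableEquiv.sumPiEquivProdPi (fun _ : Fin m ⊕ Fin m => ℝ)).symm
    ((MeasurableEquiv.arrowProdEquivProdArrow ℝ ℝ (Fin m))
      (fun j => Complex.measurableEquivRealProd (z j)))

lemma measurePreserving_Phi0 {m : ℕ} : MeasurePreserving (Phi0 m) (volume) (volume) := by
  have h1 : MeasurePreserving
      (fun (z : Fin m → ℂ) => fun j => Complex.measurableEquivRealProd (z j)) volume volume :=
    volume_preserving_pi (fun _ => Complex.volume_preserving_equiv_real_prod)
  have h2 := volume_measurePreserving_arrowProdEquivProdArrow ℝ ℝ (Fin m)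
  have h3 := volume_measurePreserving_sumPiEquivProdPi_symm (fun _ : Fin m ⊕ Fin m => ℝ)
  exact (h3.comp h2).comp h1

lemma Phi0_apply_inl {m : ℕ} (z : Fin m → ℂ) (j : Fin m) : Phi0 m z (Sum.inl j) = (z j).re := rfl
lemma Phi0_apply_inr {m : ℕ} (z : Fin m → ℂ) (j : Fin m) : Phi0 m z (Sum.inr j) = (z j).im := rfl

lemma sum_sq_eq_norm (ι : Type*) [Fintype ι] (y : EuclideanSpace ℝ ι) :
    ∑ i, (y i)^2 = ‖y‖^2 := by
  rw [EuclideanSpace.norm_eq, Real.sq_sqrt (by positivity)]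
  congr 1; ext i; rw [Real.norm_eq_abs, sq_abs]

lemma exists_rotation {ι : Type*} [Fintype ι] [DecidableEq ι]
    (v : EuclideanSpace ℝ ι) (hv : ‖v‖ = 1) (i₀ : ι) :
    ∃ Ψ : (ι → ℝ) → (ι → ℝ), MeasurePreserving Ψ volume volume ∧
      (∀ x, ∑ i, (Ψ x i)^2 = ∑ i, (x i)^2) ∧
      (∀ x, Ψ x i₀ = ∑ i, v i * x i) := by
  have hcard : Module.finrank ℝ (EuclideanSpace ℝ ι) = Fintype.card ι := by
    simp [finrank_euclideanSpace]
  have horth : Orthonormal ℝ (({i₀} : Set ι).restrict (fun _ : ι => v)) := by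
    rw [orthonormal_iff_ite]
    rintro ⟨i, hi⟩ ⟨j, hj⟩
    simp only [Set.mem_singleton_iff] at hi hj
    have hij : (⟨i, hi⟩ : ({i₀} : Set ι)) = ⟨j, hj⟩ := by
      apply Subtype.ext; simp [hi, hj]
    rw [if_pos hij]
    show inner ℝ v v = 1
    rw [real_inner_self_eq_norm_sq, hv]; norm_num
  obtain ⟨b, hb⟩ := horth.exists_orthonormalBasis_extension_of_card_eq hcard
  have hbv : b i₀ = v := hb i₀ rfl
  set e := (MeasurableEquiv.toLp 2 (ι → ℝ)).symm with he
  refine ⟨fun x => e (b.repr (e.symm x)), ?_, ?_, ?_⟩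
  · exact ((EuclideanSpace.volume_preserving_symm_measurableEquiv_toLp ι).comp
      b.measurePreserving_repr).comp (EuclideanSpace.volume_preserving_symm_measurableEquiv_toLp ι).symm
  · intro x
    calc ∑ i, (e (b.repr (e.symm x)) i)^2
        = ∑ i, ((b.repr (e.symm x) : EuclideanSpace ℝ ι) i)^2 := rfl
    _ = ‖b.repr (e.symm x)‖^2 := sum_sq_eq_norm ι _
    _ = ‖(e.symm x : EuclideanSpace ℝ ι)‖^2 := by rw [LinearIsometryEquiv.norm_map]
    _ = ∑ i, ((e.symm x : EuclideanSpace ℝ ι) i)^2 := (sum_sq_eq_norm ι _).symm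
    _ = ∑ i, (x i)^2 := rfl
  · intro x
    calc (e (b.repr (e.symm x))) i₀ = b.repr (e.symm x) i₀ := rfl
    _ = inner ℝ (b i₀) (e.symm x) := (b.repr_apply_apply _ _)
    _ = ∑ i, v i * ((e.symm x : EuclideanSpace ℝ ι) i) := by
        rw [hbv]; simp [PiLp.inner_apply, RCLike.inner_apply, mul_comm]
    _ = ∑ i, v i * x i := rfl

lemma transfer {α : Type*} [MeasureSpace α] {ι : Type*} [Fintype ι]
    (Φ : α → (ι → ℝ)) (hΦ : MeasurePreserving Φ (volume) (volume))
    (g : ι → ℝ → ℝ) (hgm : ∀ i, Measurable (g i)) (hgi : ∀ i, Integrable (g i))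
    (hg0 : ∀ i u, 0 ≤ g i u) :
    ∫⁻ z, ENNReal.ofReal (∏ i, g i (Φ z i)) = ENNReal.ofReal (∏ i, ∫ u, g i u) := by
  have hm : Measurable (fun x : ι → ℝ => ENNReal.ofReal (∏ i, g i (x i))) := by
    apply ENNReal.measurable_ofReal.comp
    apply Finset.measurable_prod
    intro i _
    exact (hgm i).comp (measurable_pi_apply i)
  rw [show (∫⁻ z, ENNReal.ofReal (∏ i, g i (Φ z i)))
      = ∫⁻ x : ι → ℝ, ENNReal.ofReal (∏ i, g i (x i)) from hΦ.lintegral_comp hm]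
  rw [← MeasureTheory.ofReal_integral_eq_lintegral_ofReal]
  · rw [MeasureTheory.integral_fintype_prod_volume_eq_prod]
  · exact Integrable.fintype_prod (fun i => hgi i)
  · exact Filter.Eventually.of_forall fun x => Finset.prod_nonneg fun i _ => hg0 i _

/-! ### The one-dimensional density -/

noncomputable def pdf1 (u : ℝ) : ℝ := (Real.sqrt Real.pi)⁻¹ * Real.exp (-u^2)

lemma pdf1_nonneg (u : ℝ) : 0 ≤ pdf1 u := by unfold pdf1; positivity

lemma pdf1_measurable : Measurable pdf1 := by
  unfold pdf1
  exact (measurable_const.mul ((measurable_id.pow_const 2).neg.exp))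

lemma pdf1_integrable : Integrable pdf1 := integrable_exp_neg_sq.const_mul _

lemma pdf1_integral : ∫ u, pdf1 u = 1 := by
  unfold pdf1
  rw [MeasureTheory.integral_const_mul]
  have h : ∫ x : ℝ, Real.exp (-x^2) = Real.sqrt Real.pi := by
    have := integral_gaussian 1
    simpa using this
  rw [h, inv_mul_cancel₀ (ne_of_gt (Real.sqrt_pos.2 Real.pi_pos))]

lemma sq_abs' (w : ℂ) : ‖w‖ ^ 2 = w.re^2 + w.im^2 := by
  rw [Complex.sq_norm, Complex.normSq_apply]; ring

lemma prod_pdf1 {m : ℕ} (x : (Fin m ⊕ Fin m) → ℝ) :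
    ∏ i, pdf1 (x i) = Real.pi ^ (-(m : ℤ)) * Real.exp (-∑ i, (x i)^2) := by
  unfold pdf1
  rw [Finset.prod_mul_distrib, Finset.prod_const]
  have hcard : Fintype.card (Fin m ⊕ Fin m) = m + m := by simp
  rw [Finset.card_univ, hcard]
  have h1 : ((Real.sqrt Real.pi)⁻¹) ^ (m + m) = Real.pi ^ (-(m : ℤ)) := by
    rw [show m + m = 2 * m by ring, pow_mul, ← Real.sqrt_inv, Real.sq_sqrt (by positivity),
      zpow_neg, zpow_natCast, inv_pow]
  rw [h1]
  congr 1
  rw [← Real.exp_sum]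
  congr 1
  rw [← Finset.sum_neg_distrib]

end GaussShiftAux

open GaussShiftAux

/-- If `z` is a standard complex Gaussian vector in `ℂᵐ` (density `π^{-m}·exp(-‖z‖²)` w.r.t.
Lebesgue measure) and `a ∈ ℂᵐ` is fixed, then
`Prob{‖z - a‖ ≤ ‖z‖} ≥ (1/√π)·2·exp(-‖a‖²/4)/(‖a‖ + √(‖a‖²+8))`. -/
theorem gaussian_shift_probability (m : ℕ) (hm : 1 ≤ m) (a : Fin m → ℂ) :
    (1 / Real.sqrt Real.pi) *
        (2 * Real.exp (-hermNorm a ^ 2 / 4) / (hermNorm a + Real.sqrt (hermNorm a ^ 2 + 8)))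
      ≤ ((volume : Measure (Fin m → ℂ)).withDensity
            (fun z => ENNReal.ofReal (Real.pi ^ (-(m : ℤ)) * Real.exp (-hermNorm z ^ 2)))
          {z | hermNorm (z - a) ≤ hermNorm z}).toReal := by
  classical
  set μ := (volume : Measure (Fin m → ℂ)).withDensity
      (fun z => ENNReal.ofReal (Real.pi ^ (-(m : ℤ)) * Real.exp (-hermNorm z ^ 2))) with hμ
  have hherm_sq : ∀ z : Fin m → ℂ, hermNorm z ^ 2 = ∑ j, ‖z j‖ ^ 2 := by
    intro z; unfold hermNorm; exact Real.sq_sqrt (by positivity)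
  have hsum_Phi0 : ∀ z : Fin m → ℂ, ∑ i, (Phi0 m z i)^2 = hermNorm z ^ 2 := by
    intro z
    rw [hherm_sq, Fintype.sum_sum_type]
    simp only [Phi0_apply_inl, Phi0_apply_inr]
    rw [← Finset.sum_add_distrib]
    exact Finset.sum_congr rfl fun j _ => (sq_abs' (z j)).symm
  -- total mass
  have huniv : μ Set.univ = ENNReal.ofReal 1 := by
    rw [hμ, withDensity_apply _ MeasurableSet.univ, Measure.restrict_univ]
    have h1 : ∀ z : Fin m → ℂ, ENNReal.ofReal (Real.pi ^ (-(m : ℤ)) * Real.exp (-hermNorm z ^ 2))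
        = ENNReal.ofReal (∏ i, pdf1 (Phi0 m z i)) := by
      intro z
      rw [prod_pdf1, hsum_Phi0]
    rw [lintegral_congr h1,
      transfer (Phi0 m) measurePreserving_Phi0 (fun _ => pdf1) (fun _ => pdf1_measurable)
        (fun _ => pdf1_integrable) (fun _ => pdf1_nonneg)]
    congr 1
    rw [Finset.prod_congr rfl (fun (i : Fin m ⊕ Fin m) _ => pdf1_integral), Finset.prod_const_one]
  have hμS_le : μ {z | hermNorm (z - a) ≤ hermNorm z} ≤ ENNReal.ofReal 1 :=
    le_trans (measure_mono (Set.subset_univ _)) (le_of_eq huniv)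
  have hμS_ne : μ {z | hermNorm (z - a) ≤ hermNorm z} ≠ ⊤ :=
    ne_top_of_le_ne_top ENNReal.ofReal_ne_top hμS_le
  by_cases ha : a = 0
  · -- trivial case
    subst ha
    have hset : {z : Fin m → ℂ | hermNorm (z - 0) ≤ hermNorm z} = Set.univ := by
      ext z; simp [sub_zero]
    rw [hset, huniv, ENNReal.toReal_ofReal one_pos.le]
    have h0 : hermNorm (0 : Fin m → ℂ) = 0 := by simp [hermNorm]
    rw [h0]
    have hsqrt8 : (2:ℝ) ≤ Real.sqrt ((0:ℝ)^2 + 8) := by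
      nlinarith [Real.sq_sqrt (show (0:ℝ) ≤ (0:ℝ)^2+8 by norm_num),
        Real.sqrt_nonneg ((0:ℝ)^2+8)]
    have hsqrtpi : (1:ℝ) ≤ Real.sqrt Real.pi := by
      nlinarith [Real.sq_sqrt Real.pi_pos.le, Real.sqrt_nonneg Real.pi, Real.pi_gt_three]
    have h1 : (1:ℝ) / Real.sqrt Real.pi ≤ 1 := by
      rw [div_le_one (by linarith)]; exact hsqrtpi
    have h2 : 2 * Real.exp (-(0:ℝ)^2/4) / ((0:ℝ) + Real.sqrt ((0:ℝ)^2 + 8)) ≤ 1 := by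
      rw [show -(0:ℝ)^2/4 = 0 by norm_num, Real.exp_zero, mul_one, zero_add,
        div_le_one (by linarith)]
      exact hsqrt8
    calc 1 / Real.sqrt Real.pi *
        (2 * Real.exp (-(0:ℝ)^2/4) / ((0:ℝ) + Real.sqrt ((0:ℝ)^2 + 8)))
        ≤ 1 * 1 := by
          apply mul_le_mul h1 h2 (by positivity) (by norm_num)
    _ = 1 := by norm_num
  · -- main case
    set s := hermNorm a with hsdef
    have hssum : (0:ℝ) < ∑ j, ‖a j‖ ^ 2 := by
      obtain ⟨j, hj⟩ := Function.ne_iff.mp ha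
      apply Finset.sum_pos' (fun j _ => by positivity)
      exact ⟨j, Finset.mem_univ j, pow_pos (norm_pos_iff.mpr hj) 2⟩
    have hs : 0 < s := Real.sqrt_pos.2 hssum
    have hAsq : s^2 = ∑ j, ((a j).re^2 + (a j).im^2) := by
      rw [hsdef, hherm_sq]
      exact Finset.sum_congr rfl fun j _ => sq_abs' _
    set ι := (Fin m ⊕ Fin m)
    set v : EuclideanSpace ℝ ι :=
      WithLp.toLp 2 (fun i => Sum.elim (fun j => (a j).re / s) (fun j => (a j).im / s) i) with hvdef
    have hv : ‖v‖ = 1 := by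
      rw [EuclideanSpace.norm_eq]
      have hsum : ∑ i, ‖v i‖^2 = 1 := by
        calc ∑ i, ‖v i‖^2 = ∑ i, (v i)^2 := by
              exact Finset.sum_congr rfl fun i _ => by rw [Real.norm_eq_abs, sq_abs]
        _ = (∑ j, ((a j).re / s)^2) + ∑ j, ((a j).im / s)^2 := Fintype.sum_sum_type _
        _ = (∑ j, (a j).re^2 / s^2) + ∑ j, (a j).im^2 / s^2 := by simp_rw [div_pow]
        _ = (∑ j, (a j).re^2) / s^2 + (∑ j, (a j).im^2) / s^2 := by
              rw [← Finset.sum_div, ← Finset.sum_div]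
        _ = (∑ j, ((a j).re^2 + (a j).im^2)) / s^2 := by
              rw [← add_div, ← Finset.sum_add_distrib]
        _ = 1 := by rw [← hAsq]; field_simp
      rw [hsum, Real.sqrt_one]
    set i₀ : ι := Sum.inl ⟨0, hm⟩ with hi₀
    obtain ⟨Ψ, hΨmp, hΨsum, hΨi₀⟩ := exists_rotation v hv i₀
    set Φ : (Fin m → ℂ) → (ι → ℝ) := fun z => Ψ (Phi0 m z) with hΦdef
    have hΦ : MeasurePreserving Φ volume volume := hΨmp.comp measurePreserving_Phi0
    have key1 : ∀ z, ∑ i, (Φ z i)^2 = hermNorm z ^ 2 := by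
      intro z; rw [hΦdef]; rw [hΨsum, hsum_Phi0]
    have key2 : ∀ z, Φ z i₀
        = (∑ j, ((a j).re * (z j).re + (a j).im * (z j).im)) / s := by
      intro z
      rw [hΦdef]
      show Ψ (Phi0 m z) i₀ = _
      rw [hΨi₀, Fintype.sum_sum_type]
      simp only [hvdef, Sum.elim_inl, Sum.elim_inr, Phi0_apply_inl, Phi0_apply_inr]
      simp_rw [div_mul_eq_mul_div]
      rw [← Finset.sum_div, ← Finset.sum_div, ← add_div, ← Finset.sum_add_distrib]
    set H : Set (Fin m → ℂ) := Φ ⁻¹' {x | s/2 ≤ x i₀} with hHdef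
    have hHmeas : MeasurableSet H :=
      hΦ.measurable (measurableSet_le measurable_const (measurable_pi_apply i₀))
    have hHsub : H ⊆ {z | hermNorm (z - a) ≤ hermNorm z} := by
      intro z hz
      have hz' : s/2 ≤ Φ z i₀ := hz
      rw [key2, le_div_iff₀ hs] at hz'
      have hT : s^2/2 ≤ ∑ j, ((a j).re * (z j).re + (a j).im * (z j).im) := by
        nlinarith
      show hermNorm (z - a) ≤ hermNorm z
      unfold hermNorm
      apply Real.sqrt_le_sqrt
      have hterm : ∀ j : Fin m, ‖(z - a) j‖^2
          = ‖z j‖^2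
            - (2*((a j).re*(z j).re + (a j).im*(z j).im) - ((a j).re^2+(a j).im^2)) := by
        intro j
        rw [Pi.sub_apply, sq_abs', sq_abs', Complex.sub_re, Complex.sub_im]
        ring
      rw [Finset.sum_congr rfl (fun j _ => hterm j), Finset.sum_sub_distrib]
      have hsum2 : ∑ j, (2*((a j).re*(z j).re + (a j).im*(z j).im) - ((a j).re^2+(a j).im^2))
          = 2 * (∑ j, ((a j).re * (z j).re + (a j).im * (z j).im)) - s^2 := by
        rw [Finset.sum_sub_distrib, ← Finset.mul_sum, hAsq]
      rw [hsum2]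
      linarith
    -- measure of H
    set g : ι → ℝ → ℝ :=
      fun i => if i = i₀ then Set.indicator (Set.Ici (s/2)) pdf1 else pdf1 with hgdef
    have hgm : ∀ i, Measurable (g i) := by
      intro i
      by_cases h : i = i₀ <;>
        simp only [hgdef, h, if_true, if_false, reduceIte]
      · exact pdf1_measurable.indicator measurableSet_Ici
      · exact pdf1_measurable
    have hgi : ∀ i, Integrable (g i) := by
      intro i
      by_cases h : i = i₀ <;> simp only [hgdef, h, if_true, if_false, reduceIte]
      · exact pdf1_integrable.indicator measurableSet_Ici
      · exact pdf1_integrable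
    have hg0 : ∀ i u, 0 ≤ g i u := by
      intro i u
      by_cases h : i = i₀ <;> simp only [hgdef, h, if_true, if_false, reduceIte]
      · exact Set.indicator_nonneg (fun x _ => pdf1_nonneg x) u
      · exact pdf1_nonneg u
    have hind : ∀ z, Set.indicator H
        (fun z => ENNReal.ofReal (Real.pi ^ (-(m : ℤ)) * Real.exp (-hermNorm z ^ 2))) z
        = ENNReal.ofReal (∏ i, g i (Φ z i)) := by
      intro z
      by_cases hz : z ∈ H
      · rw [Set.indicator_of_mem hz]
        have hzi : s/2 ≤ Φ z i₀ := hz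
        have hprod : ∏ i, g i (Φ z i) = ∏ i, pdf1 (Φ z i) := by
          apply Finset.prod_congr rfl
          intro i _
          by_cases h : i = i₀
          · subst h
            simp only [hgdef, if_true, reduceIte]
            exact Set.indicator_of_mem hzi _
          · simp only [hgdef, h, if_false, reduceIte]
        rw [hprod, prod_pdf1, key1]
      · rw [Set.indicator_of_notMem hz]
        have hzi : ¬ (s/2 ≤ Φ z i₀) := hz
        have hprod : ∏ i, g i (Φ z i) = 0 := by
          apply Finset.prod_eq_zero (Finset.mem_univ i₀)
          simp only [hgdef, if_true, reduceIte]
          exact Set.indicator_of_notMem hzi _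
        rw [hprod, ENNReal.ofReal_zero]
    have hμH : μ H = ENNReal.ofReal ((Real.sqrt Real.pi)⁻¹
        * ∫ x in Set.Ici (s/2), Real.exp (-x^2)) := by
      rw [hμ, withDensity_apply _ hHmeas]
      rw [← lintegral_indicator hHmeas]
      rw [lintegral_congr hind]
      rw [transfer Φ hΦ g hgm hgi hg0]
      congr 1
      rw [Finset.prod_eq_single i₀ ?_ ?_]
      · simp only [hgdef, if_true, reduceIte]
        rw [MeasureTheory.integral_indicator measurableSet_Ici]
        unfold pdf1
        rw [MeasureTheory.integral_const_mul]
      · intro b _ hb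
        simp only [hgdef, hb, if_false, reduceIte]
        exact pdf1_integral
      · intro h; exact absurd (Finset.mem_univ i₀) h
    -- final bound
    have hB0 : 0 ≤ (Real.sqrt Real.pi)⁻¹ * ∫ x in Set.Ici (s/2), Real.exp (-x^2) := by
      apply mul_nonneg (by positivity)
      apply MeasureTheory.setIntegral_nonneg measurableSet_Ici
      intro x _; positivity
    have htail := tail_lower_bound (s/2)
    have hsqrt4 : Real.sqrt 4 = 2 := by
      rw [show (4:ℝ) = 2^2 by norm_num, Real.sqrt_sq (by norm_num)]
    have hden_eq : s/2 + Real.sqrt ((s/2)^2 + 2) = (s + Real.sqrt (s^2 + 8))/2 := by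
      have h1 : (s/2)^2 + 2 = (s^2 + 8)/4 := by ring
      have h2 : Real.sqrt ((s^2+8)/4) = Real.sqrt (s^2+8) / 2 := by
        rw [show ((s^2+8)/4 : ℝ) = (s^2+8) * (1/2)^2 by ring, Real.sqrt_mul (by positivity),
          Real.sqrt_sq (by norm_num)]
        ring
      rw [h1, h2]; ring
    have hdpos : 0 < s + Real.sqrt (s^2+8) := by positivity
    have hexp_eq : Real.exp (-(s/2)^2) = Real.exp (-s^2/4) := by
      congr 1; ring
    have htail' : 2 * Real.exp (-s^2/4) / (s + Real.sqrt (s^2+8))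
        ≤ ∫ x in Set.Ici (s/2), Real.exp (-x^2) := by
      have h := tail_lower_bound (s/2)
      rw [hexp_eq, hden_eq] at h
      calc 2 * Real.exp (-s^2/4) / (s + Real.sqrt (s^2+8))
          = Real.exp (-s^2/4) / ((s + Real.sqrt (s^2+8))/2) := by
            rw [div_div_eq_mul_div]; ring
      _ ≤ _ := h
    calc (1 / Real.sqrt Real.pi) *
        (2 * Real.exp (-hermNorm a ^ 2 / 4) / (hermNorm a + Real.sqrt (hermNorm a ^ 2 + 8)))
        = (Real.sqrt Real.pi)⁻¹ *
          (2 * Real.exp (-s^2/4) / (s + Real.sqrt (s^2+8))) := by rw [one_div]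
    _ ≤ (Real.sqrt Real.pi)⁻¹ * ∫ x in Set.Ici (s/2), Real.exp (-x^2) :=
        mul_le_mul_of_nonneg_left htail' (by positivity)
    _ = (μ H).toReal := by rw [hμH, ENNReal.toReal_ofReal hB0]
    _ ≤ (μ {z | hermNorm (z - a) ≤ hermNorm z}).toReal :=
        ENNReal.toReal_mono hμS_ne (measure_mono hHsub)
end
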